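/- arXiv:1208.2389 — 5 statements merged into one kernel-verified Lean document; each statement's English description precedes it below -/
import Mathlib

section
/- Let 2 ≤ r ≤ k ≤ n be integers. There is a constant C = C(k,r) with the following property: if (μ_G)_G is a consistent random ordering defined on all r-uniform hypergraphs of size at most n, and H is an r-uniform hypergraph of size k, then d_TV(μ_H, ν_H) ≤ C·√(log n / n^{r-1}), where ν_H is the uniform ordering on H. -/
open Finset

/-- The linear orderings of a finite set `V ⊆ ℕ`, represented as the lists
enumerating the elements of `V` exactly once. -/
def Orderings (V : Finset ℕ) : Finset (List ℕ) :=
  (V.sort (· ≤ ·)).permutations.toFinset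

/-- An `r`-uniform hypergraph on a finite vertex set `V ⊆ ℕ`: a set of
`r`-element subsets of `V`.  For `r = 2` this is exactly a finite simple graph. -/
lemma mem_orderings {V : Finset ℕ} {l : List ℕ} :
    l ∈ Orderings V ↔ l.Nodup ∧ l.toFinset = V := by
  unfold Orderings
  rw [List.mem_toFinset, List.mem_permutations]
  constructor
  · intro h
    refine ⟨(h.nodup_iff).2 (Finset.sort_nodup V (· ≤ ·)), ?_⟩
    rw [List.toFinset_eq_of_perm _ _ h, Finset.sort_toFinset V (· ≤ ·)]
  · rintro ⟨h1, h2⟩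
    refine List.perm_of_nodup_nodup_toFinset_eq h1 (Finset.sort_nodup V (· ≤ ·)) ?_
    rw [h2, Finset.sort_toFinset V (· ≤ ·)]

lemma card_orderings (V : Finset ℕ) : (Orderings V).card = (V.card).factorial := by
  unfold Orderings
  rw [List.toFinset_card_of_nodup (List.nodup_permutations _ (Finset.sort_nodup V (· ≤ ·))),
    List.length_permutations, Finset.length_sort]

lemma orderings_length {V : Finset ℕ} {l : List ℕ} (h : l ∈ Orderings V) :
    l.length = V.card := by
  obtain ⟨h1, h2⟩ := mem_orderings.1 h
  rw [← h2, List.toFinset_card_of_nodup h1]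

section McDiarmid

variable {α : Type*} [DecidableEq α]

noncomputable def avg (s : Finset α) (f : Finset α → ℝ) : ℝ :=
  (∑ T ∈ s.powerset, f T) / 2 ^ s.card

lemma mgf_bound (s : Finset α) (f : Finset α → ℝ) (c lam : ℝ)
    (hc : ∀ e ∈ s, ∀ T ∈ s.powerset, |f (insert e T) - f (T.erase e)| ≤ c) :
    ∑ T ∈ s.powerset, Real.exp (lam * (f T - avg s f)) ≤
      2 ^ s.card * Real.exp (lam ^ 2 * s.card * c ^ 2 / 8) := by
  induction s using Finset.induction generalizing f with
  | empty =>
      simp [avg]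
  | @insert a s' ha ih =>
      have hc0 : 0 ≤ c := le_trans (abs_nonneg _) (hc a (mem_insert_self _ _) ∅ (by simp))
      set F : Finset α → ℝ := fun T => (f T + f (insert a T)) / 2 with hF
      have havg : avg (insert a s') f = avg s' F := by
        unfold avg
        rw [card_insert_of_notMem ha, sum_powerset_insert ha]
        simp only [hF]
        rw [← Finset.sum_add_distrib, ← Finset.sum_div, pow_succ]
        rw [div_div]
        ring_nf
      have hcF : ∀ e ∈ s', ∀ T ∈ s'.powerset, |F (insert e T) - F (T.erase e)| ≤ c := by
        intro e he T hT
        have hTs : T ⊆ s' := mem_powerset.1 hT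
        have hae : a ≠ e := fun h => ha (h ▸ he)
        have h1 : |f (insert e T) - f (T.erase e)| ≤ c :=
          hc e (mem_insert_of_mem he) T (mem_powerset.2 (hTs.trans (subset_insert _ _)))
        have h2 : |f (insert e (insert a T)) - f ((insert a T).erase e)| ≤ c :=
          hc e (mem_insert_of_mem he) (insert a T)
            (mem_powerset.2 (insert_subset_insert _ hTs))
        have hcomm : insert a (insert e T) = insert e (insert a T) := Finset.insert_comm a e T
        have herase : insert a (T.erase e) = (insert a T).erase e :=
          (Finset.erase_insert_of_ne hae (s := T)).symm
        calc |F (insert e T) - F (T.erase e)|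
            = |(f (insert e T) - f (T.erase e)) / 2
              + (f (insert e (insert a T)) - f ((insert a T).erase e)) / 2| := by
              simp only [hF]
              rw [← hcomm, ← herase]
              ring_nf
          _ ≤ |(f (insert e T) - f (T.erase e))| / 2
              + |(f (insert e (insert a T)) - f ((insert a T).erase e))| / 2 := by
              refine (abs_add_le _ _).trans ?_
              rw [abs_div, abs_div]
              norm_num
          _ ≤ c / 2 + c / 2 := by gcongr
          _ = c := by ring
      set E : ℝ := avg s' F with hE
      set K : ℝ := 2 * Real.exp (lam ^ 2 * c ^ 2 / 8) with hK
      calc ∑ T ∈ (insert a s').powerset, Real.exp (lam * (f T - avg (insert a s') f))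
          = ∑ T ∈ s'.powerset, (Real.exp (lam * (f T - E))
              + Real.exp (lam * (f (insert a T) - E))) := by
            rw [sum_powerset_insert ha, havg, ← Finset.sum_add_distrib]
        _ ≤ ∑ T ∈ s'.powerset, (Real.exp (lam * (F T - E)) * K) := by
            apply Finset.sum_le_sum
            intro T hT
            have haT : a ∉ T := fun h => ha (mem_powerset.1 hT h)
            set d : ℝ := f (insert a T) - f T with hd
            have hdc : |d| ≤ c := by
              have := hc a (mem_insert_self _ _) T
                (mem_powerset.2 ((mem_powerset.1 hT).trans (subset_insert _ _)))
              rwa [Finset.erase_eq_of_notMem haT] at this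
            have key : Real.exp (lam * (f T - E))
                + Real.exp (lam * (f (insert a T) - E))
                = Real.exp (lam * (F T - E))
                  * (Real.exp (-(lam * d / 2)) + Real.exp (lam * d / 2)) := by
              rw [mul_add, ← Real.exp_add, ← Real.exp_add]
              congr 1
              · simp only [hF, hd]; ring
              · simp only [hF, hd]; ring
            rw [key, hK]
            have hcosh : Real.exp (-(lam * d / 2)) + Real.exp (lam * d / 2)
                ≤ 2 * Real.exp (lam ^ 2 * c ^ 2 / 8) := by
              have h1 : Real.exp (-(lam * d / 2)) + Real.exp (lam * d / 2)
                  = 2 * Real.cosh (lam * d / 2) := by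
                rw [Real.cosh_eq]; ring
              rw [h1]
              have h2 := Real.cosh_le_exp_half_sq (lam * d / 2)
              have hsq : d ^ 2 ≤ c ^ 2 := sq_le_sq' (neg_le_of_abs_le hdc) (le_of_abs_le hdc)
              have h4 : lam ^ 2 * d ^ 2 ≤ lam ^ 2 * c ^ 2 :=
                mul_le_mul_of_nonneg_left hsq (sq_nonneg lam)
              have h3 : (lam * d / 2) ^ 2 / 2 ≤ lam ^ 2 * c ^ 2 / 8 := by
                have : (lam * d / 2) ^ 2 / 2 = lam ^ 2 * d ^ 2 / 8 := by ring
                rw [this]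
                gcongr
              have := h2.trans (Real.exp_le_exp.2 h3)
              linarith
            exact mul_le_mul_of_nonneg_left hcosh (Real.exp_pos _).le
        _ = (∑ T ∈ s'.powerset, Real.exp (lam * (F T - E))) * K := by
            rw [← Finset.sum_mul]
        _ ≤ (2 ^ s'.card * Real.exp (lam ^ 2 * s'.card * c ^ 2 / 8)) * K := by
            have hKpos : (0:ℝ) < K := by rw [hK]; positivity
            exact mul_le_mul_of_nonneg_right (ih F hcF) hKpos.le
        _ = 2 ^ (insert a s').card
              * Real.exp (lam ^ 2 * (insert a s').card * c ^ 2 / 8) := by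
            rw [card_insert_of_notMem ha, hK]
            have : lam ^ 2 * ((s'.card : ℝ) + 1) * c ^ 2 / 8
                = lam ^ 2 * s'.card * c ^ 2 / 8 + lam ^ 2 * c ^ 2 / 8 := by ring
            push_cast
            rw [this, Real.exp_add, pow_succ]
            ring

lemma tail_bound_upper (s : Finset α) (f : Finset α → ℝ) (c t : ℝ)
    (hc : ∀ e ∈ s, ∀ T ∈ s.powerset, |f (insert e T) - f (T.erase e)| ≤ c)
    (ht : 0 < t) (hD : 0 < (s.card : ℝ) * c ^ 2) :
    ((s.powerset.filter (fun T => t ≤ f T - avg s f)).card : ℝ) ≤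
      2 ^ s.card * Real.exp (-2 * t ^ 2 / (s.card * c ^ 2)) := by
  set lam : ℝ := 4 * t / (s.card * c ^ 2) with hlam
  have hlampos : 0 < lam := by positivity
  have key : ∀ T ∈ s.powerset.filter (fun T => t ≤ f T - avg s f),
      (1:ℝ) ≤ Real.exp (lam * (f T - avg s f)) * Real.exp (-(lam * t)) := by
    intro T hT
    have h1 := (mem_filter.1 hT).2
    rw [← Real.exp_add]
    have : 0 ≤ lam * (f T - avg s f) + -(lam * t) := by nlinarith
    calc (1:ℝ) = Real.exp 0 := (Real.exp_zero).symm
      _ ≤ _ := Real.exp_le_exp.2 this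
  calc ((s.powerset.filter (fun T => t ≤ f T - avg s f)).card : ℝ)
      = ∑ _T ∈ s.powerset.filter (fun T => t ≤ f T - avg s f), (1:ℝ) := by
        rw [Finset.sum_const, nsmul_eq_mul, mul_one]
    _ ≤ ∑ T ∈ s.powerset.filter (fun T => t ≤ f T - avg s f),
          Real.exp (lam * (f T - avg s f)) * Real.exp (-(lam * t)) :=
        Finset.sum_le_sum key
    _ ≤ ∑ T ∈ s.powerset, Real.exp (lam * (f T - avg s f)) * Real.exp (-(lam * t)) := by
        apply Finset.sum_le_sum_of_subset_of_nonneg (Finset.filter_subset _ _)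
        intro T _ _
        positivity
    _ = (∑ T ∈ s.powerset, Real.exp (lam * (f T - avg s f))) * Real.exp (-(lam * t)) := by
        rw [← Finset.sum_mul]
    _ ≤ (2 ^ s.card * Real.exp (lam ^ 2 * s.card * c ^ 2 / 8)) * Real.exp (-(lam * t)) := by
        exact mul_le_mul_of_nonneg_right (mgf_bound s f c lam hc) (Real.exp_pos _).le
    _ = 2 ^ s.card * Real.exp (lam ^ 2 * s.card * c ^ 2 / 8 + -(lam * t)) := by
        rw [mul_assoc, Real.exp_add]
    _ = 2 ^ s.card * Real.exp (-2 * t ^ 2 / (s.card * c ^ 2)) := by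
        congr 1
        congr 1
        rw [hlam]
        field_simp
        ring

lemma tail_bound_abs (s : Finset α) (f : Finset α → ℝ) (c t : ℝ)
    (hc : ∀ e ∈ s, ∀ T ∈ s.powerset, |f (insert e T) - f (T.erase e)| ≤ c)
    (ht : 0 < t) (hD : 0 < (s.card : ℝ) * c ^ 2) :
    ((s.powerset.filter (fun T => t ≤ |f T - avg s f|)).card : ℝ) ≤
      2 ^ (s.card + 1) * Real.exp (-2 * t ^ 2 / (s.card * c ^ 2)) := by
  have hneg : ∀ e ∈ s, ∀ T ∈ s.powerset,
      |(-f) (insert e T) - (-f) (T.erase e)| ≤ c := by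
    intro e he T hT
    have := hc e he T hT
    rw [show (-f) (insert e T) - (-f) (T.erase e)
      = -(f (insert e T) - f (T.erase e)) by simp; ring, abs_neg]
    exact this
  have havgneg : avg s (-f) = -avg s f := by
    unfold avg
    simp only [Pi.neg_apply, Finset.sum_neg_distrib, neg_div]
  have hsub : s.powerset.filter (fun T => t ≤ |f T - avg s f|) ⊆
      (s.powerset.filter (fun T => t ≤ f T - avg s f)) ∪
      (s.powerset.filter (fun T => t ≤ (-f) T - avg s (-f))) := by
    intro T hT
    obtain ⟨hT1, hT2⟩ := mem_filter.1 hT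
    rw [Finset.mem_union, mem_filter, mem_filter, havgneg]
    rcases abs_cases (f T - avg s f) with ⟨heq, _⟩ | ⟨heq, _⟩
    · exact Or.inl ⟨hT1, by rw [heq] at hT2; exact hT2⟩
    · refine Or.inr ⟨hT1, ?_⟩
      rw [heq] at hT2
      simp only [Pi.neg_apply]
      linarith
  calc ((s.powerset.filter (fun T => t ≤ |f T - avg s f|)).card : ℝ)
      ≤ (((s.powerset.filter (fun T => t ≤ f T - avg s f)) ∪
          (s.powerset.filter (fun T => t ≤ (-f) T - avg s (-f)))).card : ℝ) := by
        exact_mod_cast Nat.cast_le.2 (Finset.card_le_card hsub)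
    _ ≤ ((s.powerset.filter (fun T => t ≤ f T - avg s f)).card : ℝ) +
        ((s.powerset.filter (fun T => t ≤ (-f) T - avg s (-f))).card : ℝ) := by
        exact_mod_cast Nat.cast_le.2 (Finset.card_union_le _ _)
    _ ≤ 2 ^ s.card * Real.exp (-2 * t ^ 2 / (s.card * c ^ 2))
        + 2 ^ s.card * Real.exp (-2 * t ^ 2 / (s.card * c ^ 2)) :=
        add_le_add (tail_bound_upper s f c t hc ht hD)
          (tail_bound_upper s (-f) c t hneg ht hD)
    _ = 2 ^ (s.card + 1) * Real.exp (-2 * t ^ 2 / (s.card * c ^ 2)) := by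
        rw [pow_succ]; ring

end McDiarmid

/-- The bijection sending the `i`-th entry of `l` to the `i`-th entry of `v`. -/
def bijOf (l v : List ℕ) : ℕ → ℕ := fun x => v.getD (l.idxOf x) x

lemma bijOf_eq_getElem {l v : List ℕ} (hlen : l.length = v.length) {x : ℕ} (hx : x ∈ l) :
    bijOf l v x = v[l.idxOf x]'(by rw [← hlen]; exact List.idxOf_lt_length_iff.2 hx) := by
  unfold bijOf
  exact List.getD_eq_getElem _ _ _

lemma bijOf_mem {l v : List ℕ} (hlen : l.length = v.length) {x : ℕ} (hx : x ∈ l) :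
    bijOf l v x ∈ v := by
  rw [bijOf_eq_getElem hlen hx]
  exact List.getElem_mem _

lemma map_bijOf {l v : List ℕ} (hl : l.Nodup) (hlen : l.length = v.length) :
    l.map (bijOf l v) = v := by
  apply List.ext_getElem (by simpa using hlen)
  intro i h1 h2
  rw [List.getElem_map]
  rw [bijOf_eq_getElem hlen (List.getElem_mem _)]
  congr 1
  exact List.Nodup.idxOf_getElem hl i (by simpa using h1)

lemma bijOf_map {l : List ℕ} (hl : l.Nodup) (β : ℕ → ℕ) {x : ℕ} (hx : x ∈ l) :
    bijOf l (l.map β) x = β x := by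
  have hix : l.idxOf x < l.length := List.idxOf_lt_length_iff.2 hx
  rw [bijOf_eq_getElem (by simp) hx, List.getElem_map]
  congr 1
  exact List.getElem_idxOf hix

lemma bijOf_bijOf {l v : List ℕ} (hl : l.Nodup) (hv : v.Nodup)
    (hlen : l.length = v.length) {x : ℕ} (hx : x ∈ l) :
    bijOf v l (bijOf l v x) = x := by
  have hix : l.idxOf x < l.length := List.idxOf_lt_length_iff.2 hx
  rw [bijOf_eq_getElem hlen hx]
  rw [bijOf_eq_getElem hlen.symm (List.getElem_mem _)]
  have h1 : v.idxOf (v[l.idxOf x]'(hlen ▸ hix)) = l.idxOf x :=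
    List.Nodup.idxOf_getElem hv _ _
  simp_rw [h1]
  exact List.getElem_idxOf hix

lemma bijOf_injOn {l v : List ℕ} (hl : l.Nodup) (hv : v.Nodup)
    (hlen : l.length = v.length) :
    Set.InjOn (bijOf l v) l.toFinset := by
  intro x hx y hy hxy
  have hx' : x ∈ l := by simpa using hx
  have hy' : y ∈ l := by simpa using hy
  calc x = bijOf v l (bijOf l v x) := (bijOf_bijOf hl hv hlen hx').symm
    _ = bijOf v l (bijOf l v y) := by rw [hxy]
    _ = y := bijOf_bijOf hl hv hlen hy'

lemma bijOf_image {l v : List ℕ} (hl : l.Nodup) (hlen : l.length = v.length) :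
    l.toFinset.image (bijOf l v) = v.toFinset := by
  conv_rhs => rw [← map_bijOf hl hlen]
  ext y
  simp [List.mem_map]

lemma bijOf_image_subset {l v : List ℕ} (hl : l.Nodup) (hlen : l.length = v.length)
    {A : Finset ℕ} (hA : A ⊆ l.toFinset) :
    A.image (bijOf l v) ⊆ v.toFinset := by
  rw [← bijOf_image hl hlen]
  exact Finset.image_subset_image hA

lemma bijOf_image_card {l v : List ℕ} (hl : l.Nodup) (hv : v.Nodup)
    (hlen : l.length = v.length) {A : Finset ℕ} (hA : A ⊆ l.toFinset) :
    (A.image (bijOf l v)).card = A.card :=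
  Finset.card_image_of_injOn ((bijOf_injOn hl hv hlen).mono (by exact_mod_cast hA))

lemma bijOf_image_image {l v : List ℕ} (hl : l.Nodup) (hv : v.Nodup)
    (hlen : l.length = v.length) {A : Finset ℕ} (hA : A ⊆ l.toFinset) :
    (A.image (bijOf l v)).image (bijOf v l) = A := by
  rw [Finset.image_image]
  rw [show A = A.image id from (Finset.image_id).symm]
  rw [Finset.image_image]
  apply Finset.image_congr
  intro x hx
  simp only [Function.comp, id]
  exact bijOf_bijOf hl hv hlen (by simpa using hA (by simpa using hx))

structure FinHypergraph (r : ℕ) where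
  verts : Finset ℕ
  edges : Finset (Finset ℕ)
  card_edge : ∀ e ∈ edges, e.card = r
  edge_subset : ∀ e ∈ edges, e ⊆ verts

namespace FinHypergraph

/-- `H` is an induced subhypergraph of `G`. -/
def IsInduced {r : ℕ} (H G : FinHypergraph r) : Prop :=
  H.verts ⊆ G.verts ∧ ∀ e : Finset ℕ, e ⊆ H.verts → (e ∈ H.edges ↔ e ∈ G.edges)

/-- `φ` is an isomorphism from `G` onto `G'`. -/
def IsIso {r : ℕ} (G G' : FinHypergraph r) (φ : ℕ → ℕ) : Prop :=
  Set.InjOn φ G.verts ∧ G.verts.image φ = G'.verts ∧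
    ∀ e : Finset ℕ, e ⊆ G.verts → (e ∈ G.edges ↔ e.image φ ∈ G'.edges)

end FinHypergraph

lemma toFinset_map' (l : List ℕ) (f : ℕ → ℕ) :
    (l.map f).toFinset = l.toFinset.image f := by
  ext y; simp [List.mem_map]

lemma flt_mem_orderings {n : ℕ} {σ : List ℕ} (hσ : σ ∈ Orderings (Finset.range n))
    {S : Finset ℕ} (hS : S ⊆ Finset.range n) :
    σ.filter (fun x => decide (x ∈ S)) ∈ Orderings S := by
  obtain ⟨h1, h2⟩ := mem_orderings.1 hσ
  refine mem_orderings.2 ⟨h1.filter _, ?_⟩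
  rw [List.toFinset_filter, h2]
  ext x
  simp only [Finset.mem_filter, Finset.mem_range, decide_eq_true_eq]
  exact ⟨fun h => h.2, fun h => ⟨Finset.mem_range.1 (hS h), h⟩⟩

variable {r : ℕ}

/-- The matching property: the bijection determined by the lists `l` (an ordering of
`H.verts`) and `m` carries `H` exactly onto the trace of the edge set `T`. -/
def MatchP (H : FinHypergraph r) (T : Finset (Finset ℕ)) (l m : List ℕ) : Prop :=
  ∀ A ∈ Finset.powersetCard r H.verts, (A ∈ H.edges ↔ A.image (bijOf l m) ∈ T)

instance (H : FinHypergraph r) (T : Finset (Finset ℕ)) (l m : List ℕ) :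
    Decidable (MatchP H T l m) :=
  inferInstanceAs (Decidable (∀ A ∈ Finset.powersetCard r H.verts,
    (A ∈ H.edges ↔ A.image (bijOf l m) ∈ T)))

/-- The hypergraph on `range n` with edge set `T`. -/
def ofEdges (r n : ℕ) (T : Finset (Finset ℕ)) (hT : T ⊆ Finset.powersetCard r (Finset.range n)) :
    FinHypergraph r :=
  ⟨Finset.range n, T, fun e he => (Finset.mem_powersetCard.1 (hT he)).2,
    fun e he => (Finset.mem_powersetCard.1 (hT he)).1⟩

@[simp] lemma ofEdges_verts (n : ℕ) (T : Finset (Finset ℕ)) (hT) :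
    (ofEdges r n T hT).verts = Finset.range n := rfl
@[simp] lemma ofEdges_edges (n : ℕ) (T : Finset (Finset ℕ)) (hT) :
    (ofEdges r n T hT).edges = T := rfl

/-- The induced subhypergraph on `S`. -/
def inducedOn (G : FinHypergraph r) (S : Finset ℕ) (hS : S ⊆ G.verts) : FinHypergraph r :=
  ⟨S, G.edges.filter (fun e => e ⊆ S), fun e he => G.card_edge e (Finset.mem_filter.1 he).1,
    fun e he => (Finset.mem_filter.1 he).2⟩

@[simp] lemma inducedOn_verts (G : FinHypergraph r) (S : Finset ℕ) (hS) :
    (inducedOn G S hS).verts = S := rfl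
@[simp] lemma inducedOn_edges (G : FinHypergraph r) (S : Finset ℕ) (hS) :
    (inducedOn G S hS).edges = G.edges.filter (fun e => e ⊆ S) := rfl

lemma inducedOn_isInduced (G : FinHypergraph r) (S : Finset ℕ) (hS : S ⊆ G.verts) :
    (inducedOn G S hS).IsInduced G := by
  refine ⟨hS, fun e he => ?_⟩
  simp only [inducedOn_edges, Finset.mem_filter, inducedOn_verts] at *
  exact ⟨fun h => h.1, fun h => ⟨h, he⟩⟩

lemma matchP_isIso {H : FinHypergraph r} {n : ℕ} {T : Finset (Finset ℕ)}
    (hT : T ⊆ Finset.powersetCard r (Finset.range n)) {S : Finset ℕ}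
    (hSsub : S ⊆ Finset.range n) (hcards : H.verts.card = S.card)
    {l m : List ℕ} (hl : l ∈ Orderings H.verts) (hm : m ∈ Orderings S)
    (hMatch : MatchP H T l m) :
    H.IsIso (inducedOn (ofEdges r n T hT) S (by simpa using hSsub)) (bijOf l m) := by
  obtain ⟨hlnd, hlfin⟩ := mem_orderings.1 hl
  obtain ⟨hmnd, hmfin⟩ := mem_orderings.1 hm
  have hlen : l.length = m.length := by
    rw [orderings_length hl, orderings_length hm, hcards]
  have hvertsl : H.verts = l.toFinset := hlfin.symm
  refine ⟨by rw [hvertsl]; exact bijOf_injOn hlnd hmnd hlen, ?_, ?_⟩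
  · rw [inducedOn_verts, hvertsl, bijOf_image hlnd hlen, hmfin]
  · intro e he
    constructor
    · intro heE
      have hcard : e.card = r := H.card_edge e heE
      have hpc : e ∈ Finset.powersetCard r H.verts :=
        Finset.mem_powersetCard.2 ⟨he, hcard⟩
      have h1 : e.image (bijOf l m) ∈ T := (hMatch e hpc).1 heE
      rw [inducedOn_edges, Finset.mem_filter]
      refine ⟨by simpa using h1, ?_⟩
      rw [← hmfin]
      exact bijOf_image_subset hlnd hlen (hvertsl ▸ he)
    · intro heE
      rw [inducedOn_edges, Finset.mem_filter, ofEdges_edges] at heE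
      have h1 : e.image (bijOf l m) ∈ T := heE.1
      have hcard : (e.image (bijOf l m)).card = r :=
        (Finset.mem_powersetCard.1 (hT h1)).2
      have hcard' : e.card = r := by
        rw [← hcard, bijOf_image_card hlnd hmnd hlen (hvertsl ▸ he)]
      exact (hMatch e (Finset.mem_powersetCard.2 ⟨he, hcard'⟩)).2 h1

lemma matchP_insensitive {H : FinHypergraph r} {T : Finset (Finset ℕ)}
    {e : Finset ℕ} {S : Finset ℕ} (heS : ¬ e ⊆ S) (hcards : H.verts.card = S.card)
    {l m : List ℕ} (hl : l ∈ Orderings H.verts) (hm : m ∈ Orderings S) :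
    (MatchP H (insert e T) l m ↔ MatchP H (T.erase e) l m) := by
  obtain ⟨hlnd, hlfin⟩ := mem_orderings.1 hl
  obtain ⟨hmnd, hmfin⟩ := mem_orderings.1 hm
  have hlen : l.length = m.length := by
    rw [orderings_length hl, orderings_length hm, hcards]
  have key : ∀ A ∈ Finset.powersetCard r H.verts,
      (A.image (bijOf l m) ∈ insert e T ↔ A.image (bijOf l m) ∈ T.erase e) := by
    intro A hA
    have hAsub : A ⊆ l.toFinset := by
      rw [hlfin]; exact (Finset.mem_powersetCard.1 hA).1
    have hne : A.image (bijOf l m) ≠ e := by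
      intro hcontra
      apply heS
      rw [← hcontra, ← hmfin]
      exact bijOf_image_subset hlnd hlen hAsub
    rw [Finset.mem_insert, Finset.mem_erase]
    exact ⟨fun h => ⟨hne, h.resolve_left hne⟩, fun h => Or.inr h.2⟩
  constructor
  · intro hM A hA
    rw [← key A hA]
    exact hM A hA
  · intro hM A hA
    rw [key A hA]
    exact hM A hA

lemma matchP_count {H : FinHypergraph r} {n : ℕ} {S : Finset ℕ}
    (hSsub : S ⊆ Finset.range n) (hcards : H.verts.card = S.card)
    {l m : List ℕ} (hl : l ∈ Orderings H.verts) (hm : m ∈ Orderings S) :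
    (((Finset.powersetCard r (Finset.range n)).powerset).filter
        (fun T => MatchP H T l m)).card
      = 2 ^ ((Finset.powersetCard r (Finset.range n)).card - (H.verts.card).choose r) := by
  obtain ⟨hlnd, hlfin⟩ := mem_orderings.1 hl
  obtain ⟨hmnd, hmfin⟩ := mem_orderings.1 hm
  have hlen : l.length = m.length := by
    rw [orderings_length hl, orderings_length hm, hcards]
  set R := Finset.powersetCard r (Finset.range n) with hR
  set RS := Finset.powersetCard r S with hRS
  set β := bijOf l m with hβ
  set P := H.edges.image (fun A => A.image β) with hP
  have hRSsubR : RS ⊆ R := Finset.powersetCard_mono hSsub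
  have hPsubRS : P ⊆ RS := by
    intro B hB
    obtain ⟨A, hA, hAB⟩ := Finset.mem_image.1 hB
    have hAv : A ⊆ H.verts := H.edge_subset A hA
    have hAl : A ⊆ l.toFinset := by rw [hlfin]; exact hAv
    rw [Finset.mem_powersetCard, ← hAB]
    constructor
    · rw [← hmfin]; exact bijOf_image_subset hlnd hlen hAl
    · rw [bijOf_image_card hlnd hmnd hlen hAl]; exact H.card_edge A hA
  have key : ∀ T ∈ R.powerset, (MatchP H T l m ↔ T ∩ RS = P) := by
    intro T _
    constructor
    · intro hM
      ext B
      constructor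
      · intro hB
        obtain ⟨hBT, hBRS⟩ := Finset.mem_inter.1 hB
        obtain ⟨hBS, hBcard⟩ := Finset.mem_powersetCard.1 hBRS
        have hBm : B ⊆ m.toFinset := by rw [hmfin]; exact hBS
        set A := B.image (bijOf m l) with hA
        have hAv : A ⊆ H.verts := by
          rw [← hlfin, hA]; exact bijOf_image_subset hmnd hlen.symm hBm
        have hAcard : A.card = r := by
          rw [hA, bijOf_image_card hmnd hlnd hlen.symm hBm]; exact hBcard
        have hback : A.image β = B := by
          rw [hA, hβ]; exact bijOf_image_image hmnd hlnd hlen.symm hBm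
        have hAE : A ∈ H.edges :=
          (hM A (Finset.mem_powersetCard.2 ⟨hAv, hAcard⟩)).2 (by rw [hback]; exact hBT)
        rw [hP, Finset.mem_image]
        exact ⟨A, hAE, hback⟩
      · intro hB
        obtain ⟨A, hAE, hAB⟩ := Finset.mem_image.1 hB
        have hpc : A ∈ Finset.powersetCard r H.verts :=
          Finset.mem_powersetCard.2 ⟨H.edge_subset A hAE, H.card_edge A hAE⟩
        refine Finset.mem_inter.2 ⟨by rw [← hAB]; exact (hM A hpc).1 hAE, ?_⟩
        exact hPsubRS hB
    · intro hTP A hA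
      obtain ⟨hAv, hAcard⟩ := Finset.mem_powersetCard.1 hA
      have hAl : A ⊆ l.toFinset := by rw [hlfin]; exact hAv
      constructor
      · intro hAE
        have : A.image β ∈ P := Finset.mem_image.2 ⟨A, hAE, rfl⟩
        rw [← hTP] at this
        exact (Finset.mem_inter.1 this).1
      · intro hAT
        have hARS : A.image β ∈ RS := by
          rw [hRS, Finset.mem_powersetCard]
          constructor
          · rw [← hmfin]; exact bijOf_image_subset hlnd hlen hAl
          · rw [hβ, bijOf_image_card hlnd hmnd hlen hAl]; exact hAcard
        have : A.image β ∈ P := by rw [← hTP]; exact Finset.mem_inter.2 ⟨hAT, hARS⟩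
        obtain ⟨A', hA'E, hA'B⟩ := Finset.mem_image.1 this
        have hA'l : A' ⊆ l.toFinset := by rw [hlfin]; exact H.edge_subset A' hA'E
        have : A' = A := by
          have h1 := bijOf_image_image hlnd hmnd hlen hA'l
          have h2 := bijOf_image_image hlnd hmnd hlen hAl
          rw [← h1, hA'B, h2]
        rwa [← this]
  have hcardeq : ((R.powerset).filter (fun T => MatchP H T l m)).card
      = ((R \ RS).powerset).card := by
    apply Finset.card_bij' (i := fun T _ => T \ RS) (j := fun U _ => U ∪ P)
    · intro T hT
      rw [Finset.mem_powerset]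
      exact Finset.sdiff_subset_sdiff (Finset.mem_powerset.1 (Finset.mem_filter.1 hT).1)
        (Finset.Subset.refl _)
    · intro U hU
      have hUsub : U ⊆ R \ RS := Finset.mem_powerset.1 hU
      have hUR : U ⊆ R := hUsub.trans Finset.sdiff_subset
      have hUdisj : Disjoint U RS := Finset.disjoint_left.2
        (fun B hB => (Finset.mem_sdiff.1 (hUsub hB)).2)
      rw [Finset.mem_filter, Finset.mem_powerset]
      have hsubR : U ∪ P ⊆ R := Finset.union_subset hUR (hPsubRS.trans hRSsubR)
      refine ⟨hsubR, ?_⟩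
      rw [key _ (Finset.mem_powerset.2 hsubR)]
      rw [Finset.union_inter_distrib_right]
      rw [Finset.inter_eq_left.2 hPsubRS]
      rw [(Finset.disjoint_iff_inter_eq_empty.1 hUdisj)]
      exact Finset.empty_union P
    · intro T hT
      obtain ⟨hTR, hTM⟩ := Finset.mem_filter.1 hT
      have hTP : T ∩ RS = P := (key T hTR).1 hTM
      rw [← hTP, Finset.sdiff_union_inter]
    · intro U hU
      have hUsub : U ⊆ R \ RS := Finset.mem_powerset.1 hU
      have hUdisj : Disjoint U RS := Finset.disjoint_left.2
        (fun B hB => (Finset.mem_sdiff.1 (hUsub hB)).2)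
      rw [Finset.union_sdiff_distrib]
      rw [Finset.sdiff_eq_self_of_disjoint hUdisj]
      rw [Finset.sdiff_eq_empty_iff_subset.2 hPsubRS, Finset.union_empty]
  rw [hcardeq, Finset.card_powerset, Finset.card_sdiff_of_subset hRSsubR]
  congr 2
  rw [hRS, Finset.card_powersetCard, hcards]

lemma cnt_indep {H : FinHypergraph r} {T : Finset (Finset ℕ)} {S : Finset ℕ}
    (hcards : H.verts.card = S.card)
    {l l' : List ℕ} (hl : l ∈ Orderings H.verts) (hl' : l' ∈ Orderings H.verts) :
    ((Orderings S).filter (fun m => MatchP H T l m)).card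
      = ((Orderings S).filter (fun m => MatchP H T l' m)).card := by
  obtain ⟨hlnd, hlfin⟩ := mem_orderings.1 hl
  obtain ⟨hl'nd, hl'fin⟩ := mem_orderings.1 hl'
  have hll' : l.toFinset = l'.toFinset := by rw [hlfin, hl'fin]
  have hmemll' : ∀ x, x ∈ l ↔ x ∈ l' := by
    intro x
    rw [← List.mem_toFinset, ← List.mem_toFinset (l := l'), hll']
  -- main transfer lemma
  have main : ∀ (u u' : List ℕ), u ∈ Orderings H.verts → u' ∈ Orderings H.verts →
      ∀ m ∈ (Orderings S).filter (fun m => MatchP H T u m),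
      u'.map (bijOf u m) ∈ (Orderings S).filter (fun m => MatchP H T u' m) := by
    intro u u' hu hu' m hm
    obtain ⟨hund, hufin⟩ := mem_orderings.1 hu
    obtain ⟨hu'nd, hu'fin⟩ := mem_orderings.1 hu'
    obtain ⟨hmO, hmM⟩ := Finset.mem_filter.1 hm
    obtain ⟨hmnd, hmfin⟩ := mem_orderings.1 hmO
    have hlen : u.length = m.length := by
      rw [orderings_length hu, orderings_length hmO, hcards]
    have hmemuu' : ∀ x, x ∈ u' ↔ x ∈ u := by
      intro x
      rw [← List.mem_toFinset, ← List.mem_toFinset (l := u), hufin, hu'fin]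
    set β := bijOf u m with hβ
    have hinj : ∀ x ∈ u', ∀ y ∈ u', β x = β y → x = y := by
      intro x hx y hy hxy
      exact bijOf_injOn hund hmnd hlen (by simp [(hmemuu' x).1 hx])
        (by simp [(hmemuu' y).1 hy]) hxy
    have hm'nd : (u'.map β).Nodup := hu'nd.map_on hinj
    have hm'fin : (u'.map β).toFinset = S := by
      rw [toFinset_map', hu'fin, ← hufin, bijOf_image hund hlen, hmfin]
    refine Finset.mem_filter.2 ⟨mem_orderings.2 ⟨hm'nd, hm'fin⟩, ?_⟩
    intro A hA
    have hAu' : A ⊆ u'.toFinset := by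
      rw [hu'fin]; exact (Finset.mem_powersetCard.1 hA).1
    have himg : A.image (bijOf u' (u'.map β)) = A.image β := by
      apply Finset.image_congr
      intro x hx
      exact bijOf_map hu'nd β (by simpa using hAu' (by simpa using hx))
    rw [himg]
    exact hmM A hA
  apply Finset.card_bij' (i := fun m _ => l'.map (bijOf l m)) (j := fun m _ => l.map (bijOf l' m))
  · intro m hm; exact main l l' hl hl' m hm
  · intro m hm; exact main l' l hl' hl m hm
  · -- left inverse
    intro m hm
    obtain ⟨hmO, hmM⟩ := Finset.mem_filter.1 hm
    obtain ⟨hmnd, hmfin⟩ := mem_orderings.1 hmO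
    have hlen : l.length = m.length := by
      rw [orderings_length hl, orderings_length hmO, hcards]
    have step : l.map (bijOf l' (l'.map (bijOf l m))) = l.map (bijOf l m) := by
      apply List.map_congr_left
      intro x hx
      exact bijOf_map hl'nd (bijOf l m) ((hmemll' x).1 hx)
    rw [step, map_bijOf hlnd hlen]
  · intro m hm
    obtain ⟨hmO, hmM⟩ := Finset.mem_filter.1 hm
    obtain ⟨hmnd, hmfin⟩ := mem_orderings.1 hmO
    have hlen : l'.length = m.length := by
      rw [orderings_length hl', orderings_length hmO, hcards]
    have step : l'.map (bijOf l (l.map (bijOf l' m))) = l'.map (bijOf l' m) := by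
      apply List.map_congr_left
      intro x hx
      exact bijOf_map hlnd (bijOf l' m) ((hmemll' x).2 hx)
    rw [step, map_bijOf hl'nd hlen]

/-- A consistent random ordering on a class `𝒞` of `r`-uniform hypergraphs:
an isomorphism-invariant assignment, to each hypergraph `G` in the class, of a
probability measure `μ G` on the linear orderings of its vertex set, compatible
with restriction to induced subhypergraphs. -/
structure ConsistentRandomOrdering {r : ℕ} (𝒞 : Set (FinHypergraph r)) where
  μ : FinHypergraph r → List ℕ → ℝ
  nonneg : ∀ G l, 0 ≤ μ G l
  supported : ∀ G ∈ 𝒞, ∀ l : List ℕ, l ∉ Orderings G.verts → μ G l = 0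
  total : ∀ G ∈ 𝒞, ∑ l ∈ Orderings G.verts, μ G l = 1
  iso_invariant : ∀ G ∈ 𝒞, ∀ G' ∈ 𝒞, ∀ φ : ℕ → ℕ, G.IsIso G' φ →
    ∀ l ∈ Orderings G.verts, μ G' (l.map φ) = μ G l
  restriction : ∀ G ∈ 𝒞, ∀ H ∈ 𝒞, H.IsInduced G → ∀ m ∈ Orderings H.verts,
    μ H m = ∑ l ∈ (Orderings G.verts).filter
      (fun l => l.filter (fun x => decide (x ∈ H.verts)) = m), μ G l

lemma ident {r n : ℕ}
    (cro : ConsistentRandomOrdering {G : FinHypergraph r | G.verts.card ≤ n})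
    {H : FinHypergraph r} (hHn : H.verts.card ≤ n)
    {T : Finset (Finset ℕ)} (hT : T ⊆ Finset.powersetCard r (Finset.range n))
    {S : Finset ℕ} (hSsub : S ⊆ Finset.range n) (hcards : H.verts.card = S.card)
    {l : List ℕ} (hl : l ∈ Orderings H.verts) :
    ∑ σ ∈ Orderings (Finset.range n), cro.μ (ofEdges r n T hT) σ *
      (if MatchP H T l (σ.filter (fun x => decide (x ∈ S))) then (1:ℝ) else 0)
    = (((Orderings S).filter (fun m => MatchP H T l m)).card : ℝ) * cro.μ H l := by
  have hSn : S ⊆ (ofEdges r n T hT).verts := by rw [ofEdges_verts]; exact hSsub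
  have hHmem : H ∈ {G : FinHypergraph r | G.verts.card ≤ n} := hHn
  have hGmem : ofEdges r n T hT ∈ {G : FinHypergraph r | G.verts.card ≤ n} := by
    simp [Set.mem_setOf_eq, ofEdges_verts, Finset.card_range]
  have hGSmem : inducedOn (ofEdges r n T hT) S hSn
      ∈ {G : FinHypergraph r | G.verts.card ≤ n} := by
    simp only [Set.mem_setOf_eq, inducedOn_verts]
    calc S.card ≤ (Finset.range n).card := Finset.card_le_card hSsub
      _ = n := Finset.card_range n
  have hmaps : ∀ σ ∈ Orderings (Finset.range n),
      σ.filter (fun x => decide (x ∈ S)) ∈ Orderings S :=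
    fun σ hσ => flt_mem_orderings hσ hSsub
  rw [← Finset.sum_fiberwise_of_maps_to hmaps]
  have step1 : ∀ m ∈ Orderings S,
      ∑ σ ∈ (Orderings (Finset.range n)).filter
          (fun σ => σ.filter (fun x => decide (x ∈ S)) = m),
        cro.μ (ofEdges r n T hT) σ *
          (if MatchP H T l (σ.filter (fun x => decide (x ∈ S))) then (1:ℝ) else 0)
      = (if MatchP H T l m then (1:ℝ) else 0) *
          cro.μ (inducedOn (ofEdges r n T hT) S hSn) m := by
    intro m hm
    have hcongr : ∀ σ ∈ (Orderings (Finset.range n)).filter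
        (fun σ => σ.filter (fun x => decide (x ∈ S)) = m),
        cro.μ (ofEdges r n T hT) σ *
          (if MatchP H T l (σ.filter (fun x => decide (x ∈ S))) then (1:ℝ) else 0)
        = cro.μ (ofEdges r n T hT) σ * (if MatchP H T l m then (1:ℝ) else 0) := by
      intro σ hσ
      rw [(Finset.mem_filter.1 hσ).2]
    rw [Finset.sum_congr rfl hcongr, ← Finset.sum_mul, mul_comm]
    congr 1
    have hrest := cro.restriction (ofEdges r n T hT) hGmem
      (inducedOn (ofEdges r n T hT) S hSn) hGSmem
      (inducedOn_isInduced _ _ _) m hm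
    rw [hrest]
    apply Finset.sum_congr
    · congr 1
    · intro σ _; rfl
  rw [Finset.sum_congr rfl step1]
  have step15 : ∀ m ∈ Orderings S,
      (if MatchP H T l m then (1:ℝ) else 0) * cro.μ (inducedOn (ofEdges r n T hT) S hSn) m
      = (if MatchP H T l m then cro.μ (inducedOn (ofEdges r n T hT) S hSn) m else 0) := by
    intro m _
    rw [ite_mul, one_mul, zero_mul]
  rw [Finset.sum_congr rfl step15, ← Finset.sum_filter]
  have step2 : ∀ m ∈ (Orderings S).filter (fun m => MatchP H T l m),
      cro.μ (inducedOn (ofEdges r n T hT) S hSn) m = cro.μ H l := by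
    intro m hm
    obtain ⟨hmO, hmM⟩ := Finset.mem_filter.1 hm
    have hiso := matchP_isIso hT hSsub hcards hl hmO hmM
    have hinv := cro.iso_invariant H hHmem (inducedOn (ofEdges r n T hT) S (by simpa using hSsub))
      (by simpa only [Set.mem_setOf_eq, inducedOn_verts] using hGSmem) (bijOf l m) hiso l hl
    obtain ⟨hlnd, hlfin⟩ := mem_orderings.1 hl
    obtain ⟨hmnd, hmfin⟩ := mem_orderings.1 hmO
    have hlen : l.length = m.length := by
      rw [orderings_length hl, orderings_length hmO, hcards]
    rw [map_bijOf hlnd hlen] at hinv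
    rw [← hinv]
  rw [Finset.sum_congr rfl step2, Finset.sum_const, nsmul_eq_mul]

lemma avg_N {r n : ℕ} {H : FinHypergraph r}
    {σ : List ℕ} (hσ : σ ∈ Orderings (Finset.range n))
    {l : List ℕ} (hl : l ∈ Orderings H.verts) :
    ∑ T ∈ (Finset.powersetCard r (Finset.range n)).powerset,
      (((Finset.powersetCard (H.verts.card) (Finset.range n)).filter
        (fun S => MatchP H T l (σ.filter (fun x => decide (x ∈ S))))).card : ℝ)
    = ((Finset.powersetCard (H.verts.card) (Finset.range n)).card : ℝ)
        * 2 ^ ((Finset.powersetCard r (Finset.range n)).card - (H.verts.card).choose r) := by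
  have expand : ∀ T ∈ (Finset.powersetCard r (Finset.range n)).powerset,
      (((Finset.powersetCard (H.verts.card) (Finset.range n)).filter
        (fun S => MatchP H T l (σ.filter (fun x => decide (x ∈ S))))).card : ℝ)
      = ∑ S ∈ Finset.powersetCard (H.verts.card) (Finset.range n),
          (if MatchP H T l (σ.filter (fun x => decide (x ∈ S))) then (1:ℝ) else 0) := by
    intro T _
    rw [Finset.card_filter]
    push_cast
    rfl
  rw [Finset.sum_congr rfl expand, Finset.sum_comm]
  have inner : ∀ S ∈ Finset.powersetCard (H.verts.card) (Finset.range n),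
      ∑ T ∈ (Finset.powersetCard r (Finset.range n)).powerset,
        (if MatchP H T l (σ.filter (fun x => decide (x ∈ S))) then (1:ℝ) else 0)
      = 2 ^ ((Finset.powersetCard r (Finset.range n)).card - (H.verts.card).choose r) := by
    intro S hS
    obtain ⟨hSsub, hScard⟩ := Finset.mem_powersetCard.1 hS
    rw [← Finset.sum_filter, Finset.sum_const, nsmul_eq_mul, mul_one]
    rw [matchP_count hSsub hScard.symm hl (flt_mem_orderings hσ hSsub)]
    push_cast
    ring
  rw [Finset.sum_congr rfl inner, Finset.sum_const, nsmul_eq_mul]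

lemma diff_N {r n : ℕ} {H : FinHypergraph r}
    {σ : List ℕ} (hσ : σ ∈ Orderings (Finset.range n))
    {l : List ℕ} (hl : l ∈ Orderings H.verts) :
    ∀ e ∈ Finset.powersetCard r (Finset.range n),
    ∀ T ∈ (Finset.powersetCard r (Finset.range n)).powerset,
      |(((Finset.powersetCard (H.verts.card) (Finset.range n)).filter
          (fun S => MatchP H (insert e T) l (σ.filter (fun x => decide (x ∈ S))))).card : ℝ)
        - (((Finset.powersetCard (H.verts.card) (Finset.range n)).filter
          (fun S => MatchP H (T.erase e) l (σ.filter (fun x => decide (x ∈ S))))).card : ℝ)|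
      ≤ ((n - r).choose (H.verts.card - r) : ℝ) := by
  intro e he T _
  obtain ⟨hesub, hecard⟩ := Finset.mem_powersetCard.1 he
  set Pk := Finset.powersetCard (H.verts.card) (Finset.range n) with hPk
  set A := Pk.filter (fun S => MatchP H (insert e T) l (σ.filter (fun x => decide (x ∈ S)))) with hA
  set B := Pk.filter (fun S => MatchP H (T.erase e) l (σ.filter (fun x => decide (x ∈ S)))) with hB
  set Cs := Pk.filter (fun S => e ⊆ S) with hCs
  -- the S with e ⊆ S are at most (n-r).choose (k-r)
  have hCcard : Cs.card ≤ (n - r).choose (H.verts.card - r) := by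
    have h1 : Cs.card ≤ (Finset.powersetCard (H.verts.card - r)
        ((Finset.range n) \ e)).card := by
      apply Finset.card_le_card_of_injOn (fun S => S \ e)
      · intro S hS
        obtain ⟨hSPk, heS⟩ := Finset.mem_filter.1 hS
        obtain ⟨hSsub, hScard⟩ := Finset.mem_powersetCard.1 hSPk
        rw [Finset.mem_coe, Finset.mem_powersetCard]
        constructor
        · exact Finset.sdiff_subset_sdiff hSsub (Finset.Subset.refl e)
        · rw [Finset.card_sdiff_of_subset heS, hScard, hecard]
      · intro S1 hS1 S2 hS2 h12
        have he1 : e ⊆ S1 := (Finset.mem_filter.1 (Finset.mem_coe.1 hS1)).2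
        have he2 : e ⊆ S2 := (Finset.mem_filter.1 (Finset.mem_coe.1 hS2)).2
        have h12' : S1 \ e = S2 \ e := h12
        have : S1 \ e ∪ e = S2 \ e ∪ e := by rw [h12']
        rwa [Finset.sdiff_union_of_subset he1, Finset.sdiff_union_of_subset he2] at this
    rw [Finset.card_powersetCard, Finset.card_sdiff_of_subset hesub, Finset.card_range, hecard] at h1
    exact h1
  -- off the e-containing sets, the two counts agree
  have hfilter_eq : A.filter (fun S => ¬ e ⊆ S) = B.filter (fun S => ¬ e ⊆ S) := by
    rw [hA, hB, Finset.filter_filter, Finset.filter_filter]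
    apply Finset.filter_congr
    intro S hS
    obtain ⟨hSsub, hScard⟩ := Finset.mem_powersetCard.1 hS
    constructor
    · rintro ⟨h1, h2⟩
      exact ⟨(matchP_insensitive h2 hScard.symm hl (flt_mem_orderings hσ hSsub)).1 h1, h2⟩
    · rintro ⟨h1, h2⟩
      exact ⟨(matchP_insensitive h2 hScard.symm hl (flt_mem_orderings hσ hSsub)).2 h1, h2⟩
  have hAsplit := Finset.card_filter_add_card_filter_not
    (s := A) (p := fun S => e ⊆ S)
  have hBsplit := Finset.card_filter_add_card_filter_not
    (s := B) (p := fun S => e ⊆ S)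
  have hApsub : (A.filter (fun S => e ⊆ S)).card ≤ Cs.card := by
    apply Finset.card_le_card
    rw [hA, hCs, Finset.filter_filter]
    intro S hS
    obtain ⟨h1, h2, h3⟩ := Finset.mem_filter.1 hS
    exact Finset.mem_filter.2 ⟨h1, h3⟩
  have hBpsub : (B.filter (fun S => e ⊆ S)).card ≤ Cs.card := by
    apply Finset.card_le_card
    rw [hB, hCs, Finset.filter_filter]
    intro S hS
    obtain ⟨h1, h2, h3⟩ := Finset.mem_filter.1 hS
    exact Finset.mem_filter.2 ⟨h1, h3⟩
  rw [abs_le]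
  have e1 : (A.card : ℝ) = ((A.filter (fun S => e ⊆ S)).card : ℝ)
      + ((A.filter (fun S => ¬ e ⊆ S)).card : ℝ) := by exact_mod_cast (hAsplit).symm
  have e2 : (B.card : ℝ) = ((B.filter (fun S => e ⊆ S)).card : ℝ)
      + ((B.filter (fun S => ¬ e ⊆ S)).card : ℝ) := by exact_mod_cast (hBsplit).symm
  have e3 : ((A.filter (fun S => ¬ e ⊆ S)).card : ℝ)
      = ((B.filter (fun S => ¬ e ⊆ S)).card : ℝ) := by rw [hfilter_eq]
  have e4 : ((A.filter (fun S => e ⊆ S)).card : ℝ) ≤ ((n - r).choose (H.verts.card - r) : ℝ) := by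
    exact_mod_cast hApsub.trans hCcard
  have e5 : ((B.filter (fun S => e ⊆ S)).card : ℝ) ≤ ((n - r).choose (H.verts.card - r) : ℝ) := by
    exact_mod_cast hBpsub.trans hCcard
  have e6 : (0:ℝ) ≤ ((A.filter (fun S => e ⊆ S)).card : ℝ) := by positivity
  have e7 : (0:ℝ) ≤ ((B.filter (fun S => e ⊆ S)).card : ℝ) := by positivity
  constructor <;> linarith

lemma tv_aux {ε μbar F x a : ℝ} (hε0 : 0 < ε) (hε2 : ε ≤ 1/2) (hμ : 0 < μbar)
    (hF1 : 1 ≤ F) (hx : 0 ≤ x) (hb1 : (1-ε)*μbar ≤ a*x) (hb2 : a*x ≤ (1+ε)*μbar)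
    (ha1 : (1-ε)*F*μbar ≤ a) (ha2 : a ≤ (1+ε)*F*μbar) : |x - F⁻¹| ≤ 4*ε/F := by
  have hFpos : (0:ℝ) < F := lt_of_lt_of_le one_pos hF1
  have key1 : (1 - ε) * F * x ≤ 1 + ε := by
    have h1 : (1 - ε) * F * μbar * x ≤ a * x := mul_le_mul_of_nonneg_right ha1 hx
    have h2 : (1 - ε) * F * μbar * x ≤ (1 + ε) * μbar := h1.trans hb2
    nlinarith
  have key2 : 1 - ε ≤ (1 + ε) * F * x := by
    have h1 : a * x ≤ (1 + ε) * F * μbar * x := mul_le_mul_of_nonneg_right ha2 hx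
    have h2 : (1 - ε) * μbar ≤ (1 + ε) * F * μbar * x := hb1.trans h1
    nlinarith
  have hy : 0 ≤ F * x := mul_nonneg hFpos.le hx
  have hxu : x ≤ (1+4*ε)/F := by
    rw [le_div_iff₀ hFpos]
    nlinarith [key1, mul_nonneg hε0.le (by linarith : (0:ℝ) ≤ 1 - 2*ε)]
  have hxl : (1-4*ε)/F ≤ x := by
    rw [div_le_iff₀ hFpos]
    nlinarith [key2, sq_nonneg ε]
  have h1 : (1+4*ε)/F = 1/F + 4*ε/F := by ring
  have h2 : (1-4*ε)/F = 1/F - 4*ε/F := by ring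
  have h3 : F⁻¹ = 1/F := (one_div F).symm
  rw [abs_le]
  constructor <;> [linarith; linarith]

lemma main_bound {r k n : ℕ} (hr : 2 ≤ r) (hrk : r ≤ k) (hkn : k ≤ n)
    (cro : ConsistentRandomOrdering {G : FinHypergraph r | G.verts.card ≤ n})
    (H : FinHypergraph r) (hH : H.verts.card = k)
    (ε : ℝ) (hε0 : 0 < ε) (hε2 : ε ≤ 1/2)
    (hcon : (n.factorial : ℝ) * k.factorial * 2 *
        Real.exp (-2 * (ε * ((n.choose k : ℝ) / 2 ^ (k.choose r)))^2 /
          ((n.choose r : ℝ) * ((n - r).choose (k - r) : ℝ)^2)) < 1) :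
    (1 / 2) * ∑ l ∈ Orderings H.verts, |cro.μ H l - ((k.factorial : ℝ))⁻¹| ≤ 2 * ε := by
  subst hH
  set k := H.verts.card with hk
  set R := Finset.powersetCard r (Finset.range n) with hR
  set Pk := Finset.powersetCard k (Finset.range n) with hPk
  have hMcard : R.card = n.choose r := by
    rw [hR, Finset.card_powersetCard, Finset.card_range]
  have hPkcard : Pk.card = n.choose k := by
    rw [hPk, Finset.card_powersetCard, Finset.card_range]
  have hb_le : k.choose r ≤ R.card := by
    rw [hMcard]; exact Nat.choose_le_choose r hkn
  set μbar : ℝ := (n.choose k : ℝ) / 2 ^ (k.choose r) with hμbar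
  have hμbarpos : 0 < μbar := by
    rw [hμbar]
    apply div_pos _ (by positivity)
    exact_mod_cast Nat.choose_pos hkn
  set fN : List ℕ → List ℕ → Finset (Finset ℕ) → ℝ := fun σ l T =>
    ((Pk.filter (fun S => MatchP H T l (σ.filter (fun x => decide (x ∈ S))))).card : ℝ)
    with hfN
  set t : ℝ := ε * μbar with ht
  have htpos : 0 < t := by positivity
  set D1 : ℝ := ((n - r).choose (k - r) : ℝ) with hD1
  have hD1pos : 0 < D1 := by
    rw [hD1]
    exact_mod_cast Nat.choose_pos (Nat.sub_le_sub_right hkn r)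
  have hMpos : 0 < (R.card : ℝ) * D1 ^ 2 := by
    have : 0 < R.card := by
      rw [hMcard]; exact Nat.choose_pos (hrk.trans hkn)
    positivity
  -- the average of fN over all T
  have havg : ∀ σ ∈ Orderings (Finset.range n), ∀ l ∈ Orderings H.verts,
      avg R (fN σ l) = μbar := by
    intro σ hσ l hl
    unfold avg
    rw [hfN]
    rw [avg_N hσ hl]
    have e1 : Finset.powersetCard (H.verts.card) (Finset.range n) = Pk := by
      rw [hPk, hk]
    have e2 : Finset.powersetCard r (Finset.range n) = R := by rw [hR]
    have e3 : (H.verts.card).choose r = k.choose r := by rw [← hk]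
    rw [e1, e2, e3, hPkcard, hμbar]
    have h2 : (2:ℝ) ^ (R.card - k.choose r) * 2 ^ (k.choose r) = 2 ^ R.card := by
      rw [← pow_add, Nat.sub_add_cancel hb_le]
    rw [div_eq_div_iff (by positivity) (by positivity), mul_assoc, h2]
  -- union bound: there is a good T
  have hgood : ∃ T ∈ R.powerset, ∀ σ ∈ Orderings (Finset.range n),
      ∀ l ∈ Orderings H.verts, |fN σ l T - μbar| < t := by
    classical
    set Bad := R.powerset.filter (fun T => ∃ σ ∈ Orderings (Finset.range n),
      ∃ l ∈ Orderings H.verts, t ≤ |fN σ l T - μbar|) with hBad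
    have hperpair : ∀ σ ∈ Orderings (Finset.range n), ∀ l ∈ Orderings H.verts,
        ((R.powerset.filter (fun T => t ≤ |fN σ l T - μbar|)).card : ℝ) ≤
          2 ^ (R.card + 1) * Real.exp (-2 * t ^ 2 / (R.card * D1 ^ 2)) := by
      intro σ hσ l hl
      have hdiff := diff_N hσ hl
      have := tail_bound_abs R (fN σ l) D1 t (by
        intro e he T hT
        exact hdiff e he T hT) htpos hMpos
      rwa [havg σ hσ l hl] at this
    have hBadcard : (Bad.card : ℝ) <  2 ^ R.card := by
      have hsub : Bad ⊆ ((Orderings (Finset.range n)) ×ˢ (Orderings H.verts)).biUnion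
          (fun p => R.powerset.filter (fun T => t ≤ |fN p.1 p.2 T - μbar|)) := by
        intro T hT
        obtain ⟨hT1, σ, hσ, l, hl, hge⟩ := Finset.mem_filter.1 hT
        exact Finset.mem_biUnion.2 ⟨(σ, l), Finset.mem_product.2 ⟨hσ, hl⟩,
          Finset.mem_filter.2 ⟨hT1, hge⟩⟩
      have h1 : (Bad.card : ℝ) ≤ ∑ p ∈ (Orderings (Finset.range n)) ×ˢ (Orderings H.verts),
          ((R.powerset.filter (fun T => t ≤ |fN p.1 p.2 T - μbar|)).card : ℝ) := by
        calc (Bad.card : ℝ) ≤ ((((Orderings (Finset.range n)) ×ˢ (Orderings H.verts)).biUnion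
            (fun p => R.powerset.filter (fun T => t ≤ |fN p.1 p.2 T - μbar|))).card : ℝ) := by
              exact_mod_cast Finset.card_le_card hsub
          _ ≤ _ := by
              exact_mod_cast Finset.card_biUnion_le
      have h2 : ∑ p ∈ (Orderings (Finset.range n)) ×ˢ (Orderings H.verts),
          ((R.powerset.filter (fun T => t ≤ |fN p.1 p.2 T - μbar|)).card : ℝ)
          ≤ ∑ _p ∈ (Orderings (Finset.range n)) ×ˢ (Orderings H.verts),
            2 ^ (R.card + 1) * Real.exp (-2 * t ^ 2 / (R.card * D1 ^ 2)) := by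
        apply Finset.sum_le_sum
        intro p hp
        obtain ⟨hp1, hp2⟩ := Finset.mem_product.1 hp
        exact hperpair p.1 hp1 p.2 hp2
      have h3 : ∑ _p ∈ (Orderings (Finset.range n)) ×ˢ (Orderings H.verts),
          (2 ^ (R.card + 1) * Real.exp (-2 * t ^ 2 / (R.card * D1 ^ 2)) : ℝ)
          = (n.factorial : ℝ) * k.factorial *
            (2 ^ (R.card + 1) * Real.exp (-2 * t ^ 2 / (R.card * D1 ^ 2))) := by
        rw [Finset.sum_const, Finset.card_product, card_orderings, card_orderings,
          Finset.card_range, nsmul_eq_mul]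
        push_cast
        ring
      have h4 : (n.factorial : ℝ) * k.factorial *
          (2 ^ (R.card + 1) * Real.exp (-2 * t ^ 2 / (R.card * D1 ^ 2)))
          < 2 ^ R.card := by
        have hrw : (-2 * t ^ 2 / (R.card * D1 ^ 2))
            = -2 * (ε * ((n.choose k : ℝ) / 2 ^ (k.choose r)))^2 /
              ((n.choose r : ℝ) * ((n - r).choose (k - r) : ℝ)^2) := by
          rw [ht, hμbar, hD1, hMcard]
        calc (n.factorial : ℝ) * k.factorial *
            (2 ^ (R.card + 1) * Real.exp (-2 * t ^ 2 / (R.card * D1 ^ 2)))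
            = ((n.factorial : ℝ) * k.factorial * 2 *
              Real.exp (-2 * (ε * ((n.choose k : ℝ) / 2 ^ (k.choose r)))^2 /
                ((n.choose r : ℝ) * ((n - r).choose (k - r) : ℝ)^2))) * 2 ^ R.card := by
              rw [← hrw, pow_succ]
              ring
          _ < 1 * 2 ^ R.card := by
              apply mul_lt_mul_of_pos_right hcon (by positivity)
          _ = 2 ^ R.card := one_mul _
      linarith [h1.trans (h2.trans_eq h3)]
    have hne : ∃ T ∈ R.powerset, T ∉ Bad := by
      by_contra hcontra
      push_neg at hcontra
      have : R.powerset ⊆ Bad := hcontra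
      have hcard := Finset.card_le_card this
      rw [Finset.card_powerset] at hcard
      have : ((2:ℝ) ^ R.card : ℝ) ≤ (Bad.card : ℝ) := by exact_mod_cast hcard
      linarith
    obtain ⟨T, hT1, hT2⟩ := hne
    refine ⟨T, hT1, ?_⟩
    intro σ hσ l hl
    by_contra hcontra
    push_neg at hcontra
    exact hT2 (Finset.mem_filter.2 ⟨hT1, σ, hσ, l, hl, hcontra⟩)
  obtain ⟨T, hTmem, hTgood⟩ := hgood
  have hTsub : T ⊆ R := Finset.mem_powerset.1 hTmem
  have hHn : k ≤ n := hkn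
  -- memberships
  have hGmem : ofEdges r n T hTsub ∈ {G : FinHypergraph r | G.verts.card ≤ n} := by
    simp [Set.mem_setOf_eq, ofEdges_verts, Finset.card_range]
  -- the common count a
  set aT : List ℕ → ℕ := fun l =>
    ∑ S ∈ Pk, ((Orderings S).filter (fun m => MatchP H T l m)).card with haT
  have haT_indep : ∀ l ∈ Orderings H.verts, ∀ l' ∈ Orderings H.verts, aT l = aT l' := by
    intro l hl l' hl'
    apply Finset.sum_congr rfl
    intro S hS
    obtain ⟨hSsub, hScard⟩ := Finset.mem_powersetCard.1 hS
    exact cnt_indep hScard.symm hl hl'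
  -- identity
  have hident : ∀ l ∈ Orderings H.verts,
      (aT l : ℝ) * cro.μ H l = ∑ σ ∈ Orderings (Finset.range n),
        cro.μ (ofEdges r n T hTsub) σ * fN σ l T := by
    intro l hl
    have hswap : ∑ σ ∈ Orderings (Finset.range n), cro.μ (ofEdges r n T hTsub) σ * fN σ l T
        = ∑ S ∈ Pk, ∑ σ ∈ Orderings (Finset.range n), cro.μ (ofEdges r n T hTsub) σ *
            (if MatchP H T l (σ.filter (fun x => decide (x ∈ S))) then (1:ℝ) else 0) := by
      rw [Finset.sum_comm]
      apply Finset.sum_congr rfl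
      intro σ _
      rw [← Finset.mul_sum]
      congr 1
      show ((Pk.filter (fun S => MatchP H T l (σ.filter (fun x => decide (x ∈ S))))).card : ℝ) = _
      rw [Finset.card_filter]
      push_cast
      rfl
    rw [hswap]
    have hper : ∀ S ∈ Pk, ∑ σ ∈ Orderings (Finset.range n), cro.μ (ofEdges r n T hTsub) σ *
        (if MatchP H T l (σ.filter (fun x => decide (x ∈ S))) then (1:ℝ) else 0)
        = (((Orderings S).filter (fun m => MatchP H T l m)).card : ℝ) * cro.μ H l := by
      intro S hS
      obtain ⟨hSsub, hScard⟩ := Finset.mem_powersetCard.1 hS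
      exact ident cro hHn hTsub hSsub hScard.symm hl
    rw [Finset.sum_congr rfl hper, ← Finset.sum_mul, haT]
    push_cast
    ring
  -- bounds on the weighted sums
  have hfNbounds : ∀ σ ∈ Orderings (Finset.range n), ∀ l ∈ Orderings H.verts,
      (1 - ε) * μbar ≤ fN σ l T ∧ fN σ l T ≤ (1 + ε) * μbar := by
    intro σ hσ l hl
    have := abs_lt.1 (hTgood σ hσ l hl)
    constructor <;> [nlinarith [this.1]; nlinarith [this.2]]
  have hHmem : H ∈ {G : FinHypergraph r | G.verts.card ≤ n} := hHn
  have htotG := cro.total (ofEdges r n T hTsub) hGmem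
  rw [ofEdges_verts] at htotG
  have hsum_bounds : ∀ l ∈ Orderings H.verts,
      (1 - ε) * μbar ≤ (aT l : ℝ) * cro.μ H l ∧
        (aT l : ℝ) * cro.μ H l ≤ (1 + ε) * μbar := by
    intro l hl
    rw [hident l hl]
    constructor
    · calc (1 - ε) * μbar = ∑ σ ∈ Orderings (Finset.range n),
          cro.μ (ofEdges r n T hTsub) σ * ((1 - ε) * μbar) := by
            rw [← Finset.sum_mul, htotG, one_mul]
        _ ≤ _ := by
            apply Finset.sum_le_sum
            intro σ hσ
            exact mul_le_mul_of_nonneg_left (hfNbounds σ hσ l hl).1 (cro.nonneg _ _)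
    · calc ∑ σ ∈ Orderings (Finset.range n), cro.μ (ofEdges r n T hTsub) σ * fN σ l T
          ≤ ∑ σ ∈ Orderings (Finset.range n),
            cro.μ (ofEdges r n T hTsub) σ * ((1 + ε) * μbar) := by
            apply Finset.sum_le_sum
            intro σ hσ
            exact mul_le_mul_of_nonneg_left (hfNbounds σ hσ l hl).2 (cro.nonneg _ _)
        _ = (1 + ε) * μbar := by rw [← Finset.sum_mul, htotG, one_mul]
  -- bound on a itself
  have htotH := cro.total H hHmem
  set F : ℝ := (k.factorial : ℝ) with hF
  have hFpos : (0:ℝ) < F := by rw [hF]; exact_mod_cast k.factorial_pos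
  have hcardOH : ((Orderings H.verts).card : ℝ) = F := by
    rw [card_orderings, hF, hk]
  have hOHne : (Orderings H.verts).Nonempty := by
    rw [← Finset.card_pos]
    have : (Orderings H.verts).card = k.factorial := by rw [card_orderings, hk]
    rw [this]; exact k.factorial_pos
  obtain ⟨l₀, hl₀⟩ := hOHne
  have ha_eq : (aT l₀ : ℝ) = ∑ l ∈ Orderings H.verts, (aT l : ℝ) * cro.μ H l := by
    have : ∀ l ∈ Orderings H.verts, (aT l : ℝ) * cro.μ H l = (aT l₀ : ℝ) * cro.μ H l := by
      intro l hl
      rw [haT_indep l hl l₀ hl₀]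
    rw [Finset.sum_congr rfl this, ← Finset.mul_sum, htotH, mul_one]
  have ha_bounds : (1 - ε) * F * μbar ≤ (aT l₀ : ℝ) ∧ (aT l₀ : ℝ) ≤ (1 + ε) * F * μbar := by
    constructor
    · rw [ha_eq]
      calc (1 - ε) * F * μbar = ∑ _l ∈ Orderings H.verts, ((1 - ε) * μbar) := by
            rw [Finset.sum_const, nsmul_eq_mul, hcardOH]; ring
        _ ≤ _ := Finset.sum_le_sum (fun l hl => (hsum_bounds l hl).1)
    · rw [ha_eq]
      calc ∑ l ∈ Orderings H.verts, (aT l : ℝ) * cro.μ H l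
          ≤ ∑ _l ∈ Orderings H.verts, ((1 + ε) * μbar) :=
            Finset.sum_le_sum (fun l hl => (hsum_bounds l hl).2)
        _ = (1 + ε) * F * μbar := by
            rw [Finset.sum_const, nsmul_eq_mul, hcardOH]; ring
  -- per-ordering bound on μ
  have hperl : ∀ l ∈ Orderings H.verts, |cro.μ H l - F⁻¹| ≤ 4 * ε / F := by
    intro l hl
    have hb1 := (hsum_bounds l hl).1
    have hb2 := (hsum_bounds l hl).2
    rw [haT_indep l hl l₀ hl₀] at hb1 hb2
    have hF1 : (1:ℝ) ≤ F := by
      rw [hF]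
      exact_mod_cast k.factorial_pos
    exact tv_aux hε0 hε2 hμbarpos hF1 (cro.nonneg _ _) hb1 hb2 ha_bounds.1 ha_bounds.2
  -- conclude
  have hsumabs : ∑ l ∈ Orderings H.verts, |cro.μ H l - ((k.factorial : ℝ))⁻¹| ≤ 4 * ε := by
    calc ∑ l ∈ Orderings H.verts, |cro.μ H l - ((k.factorial : ℝ))⁻¹|
        ≤ ∑ _l ∈ Orderings H.verts, (4 * ε / F) := Finset.sum_le_sum (fun l hl => hperl l hl)
      _ = 4 * ε := by
          rw [Finset.sum_const, nsmul_eq_mul, hcardOH]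
          field_simp
  linarith

lemma log_factorial_le (m : ℕ) : Real.log (m.factorial : ℝ) ≤ m * Real.log m := by
  rcases Nat.eq_zero_or_pos m with hm | hm
  · subst hm; simp
  have h1 : (m.factorial : ℝ) ≤ (m:ℝ)^m := by exact_mod_cast m.factorial_le_pow
  calc Real.log (m.factorial : ℝ) ≤ Real.log ((m:ℝ)^m) :=
        Real.log_le_log (by exact_mod_cast m.factorial_pos) h1
    _ = m * Real.log m := Real.log_pow m m

lemma theta_eq {ε B M D bR : ℝ} (b : ℕ) (hM : 0 < M) (hD : 0 < D) (hbR : 0 < bR)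
    (hid : B * bR = M * D) :
    -2*(ε*(B/2^b))^2/(M*D^2) = -(2*ε^2*M/((4:ℝ)^b*bR^2)) := by
  have hsq : B^2*bR^2 = M^2*D^2 := by
    calc B^2*bR^2 = (B*bR)^2 := by ring
      _ = (M*D)^2 := by rw [hid]
      _ = M^2*D^2 := by ring
  have h4 : ((4:ℝ))^b = (2^b)^2 := by
    rw [← pow_mul, show (4:ℝ) = 2^2 by norm_num, ← pow_mul, mul_comm]
  have h2b : (0:ℝ) < 2^b := by positivity
  rw [h4]
  field_simp
  ring_nf
  have key := congrArg (fun y => y * (ε^2 * (2:ℝ)^(b*2) * 2)) hsq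
  linarith [key, congrArg (fun y => ε^2 * y) hsq]

/-- Quantitative uniqueness: for `2 ≤ r ≤ k ≤ n`, there is a constant `C = C(k,r)`
such that for any consistent random ordering on `r`-uniform hypergraphs of size
at most `n` and any hypergraph `H` of size `k`, the total variation distance from
the uniform ordering `ν_H` (which puts mass `1/k!` on each ordering) is at most
`C·√(log n / n^(r-1))`. -/
theorem uniqueErgodicity.stmt2 (k r : ℕ) (hr : 2 ≤ r) (hrk : r ≤ k) :
    ∃ C : ℝ, ∀ n : ℕ, k ≤ n →
      ∀ cro : ConsistentRandomOrdering {G : FinHypergraph r | G.verts.card ≤ n},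
      ∀ H : FinHypergraph r, H.verts.card = k →
        (1 / 2) * ∑ l ∈ Orderings H.verts, |cro.μ H l - ((k.factorial : ℝ))⁻¹|
          ≤ C * Real.sqrt (Real.log n / (n : ℝ) ^ (r - 1)) := by
  have hbpos : 0 < k.choose r := Nat.choose_pos hrk
  set K : ℝ := 2 * 2^r * (r.factorial : ℝ) * 4^(k.choose r) * ((k.choose r):ℝ)^2 with hK
  have hKpos : 0 < K := by
    have hb0 : (0:ℝ) < ((k.choose r):ℝ) := by exact_mod_cast hbpos
    have hrfac : (0:ℝ) < (r.factorial:ℝ) := by exact_mod_cast r.factorial_pos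
    positivity
  set N0 : ℕ := 2*r + k + 2 + ⌈(64:ℝ)*K^2⌉₊ with hN0
  have hN0_1 : 1 ≤ N0 := by omega
  clear_value K N0
  refine ⟨max (2*Real.sqrt K) (Real.sqrt ((N0:ℝ)^k / Real.log 2)), ?_⟩
  intro n hkn cro H hH
  have hn2 : 2 ≤ n := le_trans hr (hrk.trans hkn)
  have hn1R : (1:ℝ) < n := by exact_mod_cast hn2
  have hlogn_pos : 0 < Real.log n := Real.log_pos hn1R
  have hnpos : (0:ℝ) < n := by positivity
  have hxpos : 0 < Real.log n / (n:ℝ)^(r-1) := div_pos hlogn_pos (by positivity)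
  set x : ℝ := Real.log n / (n:ℝ)^(r-1) with hx
  clear_value x
  have hsqx : 0 ≤ Real.sqrt x := Real.sqrt_nonneg x
  have hHmem : H ∈ {G : FinHypergraph r | G.verts.card ≤ n} := by
    simp only [Set.mem_setOf_eq, hH]; exact hkn
  by_cases hcase : n < N0
  · -- small n : trivial bound
    have hLHS : (1 / 2) * ∑ l ∈ Orderings H.verts, |cro.μ H l - ((k.factorial : ℝ))⁻¹| ≤ 1 := by
      have hper : ∀ l ∈ Orderings H.verts,
          |cro.μ H l - ((k.factorial : ℝ))⁻¹| ≤ cro.μ H l + ((k.factorial : ℝ))⁻¹ := by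
        intro l _
        have hc0 : (0:ℝ) ≤ ((k.factorial : ℝ))⁻¹ := by positivity
        have hμ0 := cro.nonneg H l
        rw [abs_le]
        constructor <;> [linarith; linarith]
      have h2 : ∑ l ∈ Orderings H.verts, |cro.μ H l - ((k.factorial : ℝ))⁻¹|
          ≤ ∑ l ∈ Orderings H.verts, (cro.μ H l + ((k.factorial : ℝ))⁻¹) :=
        Finset.sum_le_sum hper
      have h3 : ∑ l ∈ Orderings H.verts, (cro.μ H l + ((k.factorial : ℝ))⁻¹) = 2 := by
        rw [Finset.sum_add_distrib, cro.total H hHmem, Finset.sum_const, nsmul_eq_mul,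
          card_orderings, hH]
        have : ((k.factorial : ℝ)) ≠ 0 := by exact_mod_cast k.factorial_pos.ne'
        field_simp
        norm_num
      linarith
    have hRHS : (1:ℝ) ≤ max (2*Real.sqrt K) (Real.sqrt ((N0:ℝ)^k / Real.log 2))
        * Real.sqrt x := by
      have hlog2pos : (0:ℝ) < Real.log 2 := Real.log_pos (by norm_num)
      have hnN0 : n ≤ N0 := le_of_lt hcase
      have hxlow : Real.log 2 / (N0:ℝ)^k ≤ x := by
        rw [hx]
        apply div_le_div₀ hlogn_pos.le
          (Real.log_le_log (by norm_num) (by exact_mod_cast hn2)) (by positivity)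
        calc (n:ℝ)^(r-1) ≤ (n:ℝ)^k :=
              pow_le_pow_right₀ hn1R.le (by omega)
          _ ≤ (N0:ℝ)^k := pow_le_pow_left₀ (by positivity) (by exact_mod_cast hnN0) k
      have hN0pos : (0:ℝ) < (N0:ℝ)^k := by
        have : (0:ℝ) < (N0:ℝ) := by exact_mod_cast hN0_1
        positivity
      have hprod : (1:ℝ) ≤ ((N0:ℝ)^k / Real.log 2) * x := by
        have h1 : ((N0:ℝ)^k / Real.log 2) * (Real.log 2 / (N0:ℝ)^k) = 1 := by
          field_simp
        calc (1:ℝ) = ((N0:ℝ)^k / Real.log 2) * (Real.log 2 / (N0:ℝ)^k) := h1.symm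
          _ ≤ ((N0:ℝ)^k / Real.log 2) * x := by
              apply mul_le_mul_of_nonneg_left hxlow (by positivity)
      calc (1:ℝ) = Real.sqrt 1 := Real.sqrt_one.symm
        _ ≤ Real.sqrt (((N0:ℝ)^k / Real.log 2) * x) := Real.sqrt_le_sqrt hprod
        _ = Real.sqrt ((N0:ℝ)^k / Real.log 2) * Real.sqrt x :=
            Real.sqrt_mul (by positivity) x
        _ ≤ max (2*Real.sqrt K) (Real.sqrt ((N0:ℝ)^k / Real.log 2)) * Real.sqrt x :=
            mul_le_mul_of_nonneg_right (le_max_right _ _) hsqx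
    linarith [hLHS, hRHS]
  · -- main case
    push_neg at hcase
    have hn2r : 2*r ≤ n := le_trans (by omega) hcase
    have hnK : (64:ℝ)*K^2 ≤ n := by
      have h1 : ⌈(64:ℝ)*K^2⌉₊ ≤ n := le_trans (by omega) hcase
      calc (64:ℝ)*K^2 ≤ (⌈(64:ℝ)*K^2⌉₊ : ℝ) := Nat.le_ceil _
        _ ≤ n := by exact_mod_cast h1
    set ε : ℝ := Real.sqrt (K * x) with hε
    clear_value ε
    have hKx_pos : 0 < K * x := mul_pos hKpos hxpos
    have hε0 : 0 < ε := by rw [hε]; exact Real.sqrt_pos.2 hKx_pos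
    have hεsq : ε^2 = K * x := by rw [hε]; exact Real.sq_sqrt hKx_pos.le
    have hsqrtn_pos : 0 < Real.sqrt n := Real.sqrt_pos.2 hnpos
    have hlog_le : Real.log n ≤ 2 * Real.sqrt n := by
      have h1 : Real.log (Real.sqrt n) ≤ Real.sqrt n - 1 :=
        Real.log_le_sub_one_of_pos hsqrtn_pos
      have h2 : Real.log (Real.sqrt n) = Real.log n / 2 := Real.log_sqrt hnpos.le
      linarith
    have hpow_ge : (n:ℝ) ≤ (n:ℝ)^(r-1) := by
      calc (n:ℝ) = (n:ℝ)^1 := (pow_one _).symm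
        _ ≤ (n:ℝ)^(r-1) := pow_le_pow_right₀ hn1R.le (by omega)
    have hx_le : x ≤ 2 / Real.sqrt n := by
      rw [hx, div_le_div_iff₀ (by positivity) hsqrtn_pos]
      have hss : Real.sqrt n * Real.sqrt n = (n:ℝ) := Real.mul_self_sqrt hnpos.le
      nlinarith [mul_nonneg (by linarith [hlog_le] : (0:ℝ) ≤ 2*Real.sqrt n - Real.log n)
        hsqrtn_pos.le, hss, hpow_ge]
    have h8K : (8:ℝ)*K ≤ Real.sqrt n := by
      have h1 := Real.sqrt_le_sqrt hnK
      rwa [show (64:ℝ)*K^2 = (8*K)^2 by ring, Real.sqrt_sq (by positivity)] at h1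
    have hε2 : ε ≤ 1/2 := by
      have hKx : K * x ≤ 1/4 := by
        have h1 : K * x ≤ K * (2/Real.sqrt n) := mul_le_mul_of_nonneg_left hx_le hKpos.le
        have e : K*(2/Real.sqrt n) = (2*K)/Real.sqrt n := by ring
        have h2 : K * (2/Real.sqrt n) ≤ 1/4 := by
          rw [e, div_le_iff₀ hsqrtn_pos]
          linarith [h8K]
        linarith
      calc ε = Real.sqrt (K*x) := hε
        _ ≤ Real.sqrt (1/4) := Real.sqrt_le_sqrt hKx
        _ = 1/2 := by rw [show (1/4:ℝ) = (1/2)^2 by norm_num, Real.sqrt_sq (by norm_num)]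
    -- the concentration hypothesis
    have hBpos : (0:ℝ) < (n.choose k : ℝ) := by exact_mod_cast Nat.choose_pos hkn
    have hMpos : (0:ℝ) < (n.choose r : ℝ) := by exact_mod_cast Nat.choose_pos (hrk.trans hkn)
    have hDpos : (0:ℝ) < ((n-r).choose (k-r) : ℝ) := by
      exact_mod_cast Nat.choose_pos (Nat.sub_le_sub_right hkn r)
    have hbRpos : (0:ℝ) < ((k.choose r):ℝ) := by exact_mod_cast hbpos
    have hid : (n.choose k : ℝ) * ((k.choose r):ℝ)
        = (n.choose r : ℝ) * ((n-r).choose (k-r) : ℝ) := by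
      exact_mod_cast Nat.choose_mul hrk
    have hθeq : -2*(ε*((n.choose k : ℝ)/2^(k.choose r)))^2
          /((n.choose r : ℝ)*(((n-r).choose (k-r):ℕ):ℝ)^2)
        = -(2*ε^2*(n.choose r : ℝ)/((4:ℝ)^(k.choose r)*((k.choose r):ℝ)^2)) :=
      theta_eq (k.choose r) hMpos hDpos hbRpos hid
    have hrfacpos : (0:ℝ) < (r.factorial:ℝ) := by exact_mod_cast r.factorial_pos
    have hMlow : (n:ℝ)^r/(2^r*(r.factorial:ℝ)) ≤ (n.choose r : ℝ) := by
      have h1 := Nat.pow_le_choose (α := ℝ) r n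
      have h2 : (n:ℝ)/2 ≤ ((n+1-r : ℕ):ℝ) := by
        rw [Nat.cast_sub (by omega : r ≤ n+1)]
        push_cast
        have : (2:ℝ)*r ≤ n := by exact_mod_cast hn2r
        linarith
      have h3 : ((n:ℝ)/2)^r ≤ (((n+1-r:ℕ):ℝ))^r := pow_le_pow_left₀ (by positivity) h2 r
      calc (n:ℝ)^r/(2^r*(r.factorial:ℝ)) = ((n:ℝ)/2)^r/(r.factorial:ℝ) := by
            rw [div_pow]; ring
        _ ≤ (((n+1-r:ℕ):ℝ))^r / (r.factorial:ℝ) := by gcongr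
        _ ≤ (n.choose r : ℝ) := h1
    have hnr_split : (n:ℝ)^r = (n:ℝ)^(r-1)*(n:ℝ) := by
      rw [← pow_succ]
      congr 1
      omega
    have hθ_ge : 4*(n:ℝ)*Real.log n
        ≤ 2*ε^2*(n.choose r : ℝ)/((4:ℝ)^(k.choose r)*((k.choose r):ℝ)^2) := by
      rw [hεsq]
      have hc1 : (0:ℝ) ≤ 2*(K*x) := by linarith [hKx_pos]
      have h1' : 2*(K*x) * ((n:ℝ)^r/(2^r*(r.factorial:ℝ))) ≤ 2*(K*x)*(n.choose r:ℝ) :=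
        mul_le_mul_of_nonneg_left hMlow hc1
      have h1 : 2*(K*x)*((n:ℝ)^r/(2^r*(r.factorial:ℝ)))/((4:ℝ)^(k.choose r)*((k.choose r):ℝ)^2)
          ≤ 2*(K*x)*(n.choose r:ℝ)/((4:ℝ)^(k.choose r)*((k.choose r):ℝ)^2) :=
        (div_le_div_iff_of_pos_right (by positivity)).2 h1'
      have h2 : 2*(K*x)*((n:ℝ)^r/(2^r*(r.factorial:ℝ)))/((4:ℝ)^(k.choose r)*((k.choose r):ℝ)^2)
          = 4*(n:ℝ)*Real.log n := by
        rw [hK, hx, hnr_split]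
        have h4b : (0:ℝ) < (4:ℝ)^(k.choose r) := by positivity
        have h2r : (0:ℝ) < (2:ℝ)^r := by positivity
        have hnr1 : (0:ℝ) < (n:ℝ)^(r-1) := by positivity
        field_simp
        ring
      calc 4*(n:ℝ)*Real.log n
          = 2*(K*x)*((n:ℝ)^r/(2^r*(r.factorial:ℝ)))/((4:ℝ)^(k.choose r)*((k.choose r):ℝ)^2) :=
            h2.symm
        _ ≤ _ := by
            calc _ ≤ 2*(K*x)*(n.choose r:ℝ)/((4:ℝ)^(k.choose r)*((k.choose r):ℝ)^2) := h1
              _ = 2*(K*x)*(n.choose r:ℝ)/((4:ℝ)^(k.choose r)*((k.choose r):ℝ)^2) := rfl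
    have hnfacpos : (0:ℝ) < (n.factorial:ℝ) := by exact_mod_cast n.factorial_pos
    have hkfacpos : (0:ℝ) < (k.factorial:ℝ) := by exact_mod_cast k.factorial_pos
    have hlog_sum : Real.log (2*(n.factorial:ℝ)*(k.factorial:ℝ)) < 4*(n:ℝ)*Real.log n := by
      rw [Real.log_mul (by positivity) hkfacpos.ne', Real.log_mul (by norm_num) hnfacpos.ne']
      have h1 : Real.log 2 ≤ Real.log n := Real.log_le_log (by norm_num) (by exact_mod_cast hn2)
      have h2 := log_factorial_le n
      have h3 := log_factorial_le k
      have hk1 : (1:ℝ) ≤ (k:ℝ) := by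
        have : 1 ≤ k := le_trans (by norm_num) (hr.trans hrk)
        exact_mod_cast this
      have h4 : (k:ℝ)*Real.log k ≤ (n:ℝ)*Real.log n := by
        have hlk : Real.log k ≤ Real.log n :=
          Real.log_le_log (by linarith) (by exact_mod_cast hkn)
        have hlk0 : 0 ≤ Real.log k := Real.log_nonneg hk1
        have hkn' : (k:ℝ) ≤ (n:ℝ) := by exact_mod_cast hkn
        exact mul_le_mul hkn' hlk hlk0 hnpos.le
      have h5 : Real.log n ≤ (n:ℝ)*Real.log n := le_mul_of_one_le_left hlogn_pos.le hn1R.le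
      have h6 : 0 < (n:ℝ)*Real.log n := mul_pos hnpos hlogn_pos
      linarith
    have hcon : (n.factorial : ℝ) * k.factorial * 2 *
        Real.exp (-2 * (ε * ((n.choose k : ℝ) / 2 ^ (k.choose r)))^2 /
          ((n.choose r : ℝ) * ((n - r).choose (k - r) : ℝ)^2)) < 1 := by
      have hexp : Real.exp (-(2*ε^2*(n.choose r : ℝ)/((4:ℝ)^(k.choose r)*((k.choose r):ℝ)^2)))
          < Real.exp (-(Real.log (2*(n.factorial:ℝ)*(k.factorial:ℝ)))) := by
        apply Real.exp_lt_exp.2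
        have h7 := hθ_ge
        linarith [hlog_sum]
      rw [Real.exp_neg (Real.log (2*(n.factorial:ℝ)*(k.factorial:ℝ))),
        Real.exp_log (by positivity)] at hexp
      calc (n.factorial : ℝ) * k.factorial * 2 *
          Real.exp (-2 * (ε * ((n.choose k : ℝ) / 2 ^ (k.choose r)))^2 /
            ((n.choose r : ℝ) * ((n - r).choose (k - r) : ℝ)^2))
          = (n.factorial : ℝ) * k.factorial * 2 *
            Real.exp (-(2*ε^2*(n.choose r : ℝ)/((4:ℝ)^(k.choose r)*((k.choose r):ℝ)^2))) := by
            congr 1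
            rw [← hθeq]
        _ < (n.factorial : ℝ) * k.factorial * 2 *
            (2*(n.factorial:ℝ)*(k.factorial:ℝ))⁻¹ := by
            apply mul_lt_mul_of_pos_left hexp (by positivity)
        _ = 1 := by field_simp
    have hmain := main_bound hr hrk hkn cro H hH ε hε0 hε2 hcon
    calc (1 / 2) * ∑ l ∈ Orderings H.verts, |cro.μ H l - ((k.factorial : ℝ))⁻¹|
        ≤ 2*ε := hmain
      _ = 2*Real.sqrt K * Real.sqrt x := by
          rw [hε, Real.sqrt_mul hKpos.le, mul_assoc]
      _ ≤ max (2*Real.sqrt K) (Real.sqrt ((N0:ℝ)^k / Real.log 2)) * Real.sqrt x :=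
          mul_le_mul_of_nonneg_right (le_max_left _ _) hsqx
end

section
/- Let k ≥ r ≥ 2 be integers. Let G be an r-uniform hypergraph and H an r-uniform hypergraph on k vertices with N_ind(H,G) > 0. Suppose δ ≥ 0 is such that for every pair of linear orderings ord_G of V(G) and ord_H of V(H), |N_ord(H,G)/N_ind(H,G) − 1/k!| ≤ δ. Let μ_G and μ_H be probability measures on the linear orderings of V(G) and V(H), respectively, such that for every embedding φ of H in G, the pull-back of μ_G under φ equals μ_H. Then d_TV(μ_H, ν_H) ≤ δ·k!/2, where ν_H is the uniform probability measure on linear orderings of V(H). -/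
open Finset

/-- Embeddings of `H` into `G`: isomorphisms of `H` onto an induced subhypergraph
of `G`, normalized to be the identity off the vertex set of `H` (so that they
form a finite set which counts embeddings exactly once each). -/
def Embs {r : ℕ} (H G : FinHypergraph r) : Set (ℕ → ℕ) :=
  {φ | Set.InjOn φ H.verts ∧ (∀ x ∈ H.verts, φ x ∈ G.verts) ∧
    (∀ e : Finset ℕ, e ⊆ H.verts → (e ∈ H.edges ↔ e.image φ ∈ G.edges)) ∧
    (∀ x, x ∉ H.verts → φ x = x)}

/-- `N_ind(H,G)`: the number of embeddings of `H` into `G`. -/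
noncomputable def Nind {r : ℕ} (H G : FinHypergraph r) : ℕ := (Embs H G).ncard

/-- An embedding `φ` of `H` preserves the orderings `ordH` (of `V(H)`) and
`ordG` (of `V(G)`) if the restriction of `ordG` to the image of `φ` is the
`φ`-image of `ordH`, i.e. the pull-back of `ordG` under `φ` is `ordH`. -/
def Preserves {r : ℕ} (H : FinHypergraph r) (φ : ℕ → ℕ) (ordH ordG : List ℕ) : Prop :=
  ordG.filter (fun x => decide (x ∈ H.verts.image φ)) = ordH.map φ

instance {r : ℕ} (H : FinHypergraph r) (φ : ℕ → ℕ) (ordH ordG : List ℕ) :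
    Decidable (Preserves H φ ordH ordG) :=
  decidable_of_iff (ordG.filter (fun x => decide (x ∈ H.verts.image φ)) = ordH.map φ)
    Iff.rfl

/-- `N_ord(H,G)`: the number of embeddings of `H` into `G` preserving the given
pair of orderings. -/
noncomputable def Nord {r : ℕ} (H G : FinHypergraph r) (ordH ordG : List ℕ) : ℕ :=
  {φ ∈ Embs H G | Preserves H φ ordH ordG}.ncard

/-- Key averaging lemma: if all ordered-embedding counts of `H` in `G` are within
`δ` of the uniform proportion `1/k!`, and `μ_G` pulls back to `μ_H` under every
embedding of `H` in `G`, then `μ_H` is within `δ·k!/2` of uniform in total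
variation. -/
theorem uniqueErgodicity.stmt3 (r k : ℕ) (hr : 2 ≤ r) (hrk : r ≤ k)
    (H G : FinHypergraph r) (hk : H.verts.card = k) (hpos : 0 < Nind H G)
    (δ : ℝ) (hδ : 0 ≤ δ)
    (hbd : ∀ ordG ∈ Orderings G.verts, ∀ ordH ∈ Orderings H.verts,
      |(Nord H G ordH ordG : ℝ) / (Nind H G : ℝ) - ((k.factorial : ℝ))⁻¹| ≤ δ)
    (μG μH : List ℕ → ℝ)
    (hGnonneg : ∀ l, 0 ≤ μG l) (hGsupp : ∀ l ∉ Orderings G.verts, μG l = 0)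
    (hGtotal : ∑ l ∈ Orderings G.verts, μG l = 1)
    (hHnonneg : ∀ l, 0 ≤ μH l) (hHsupp : ∀ l ∉ Orderings H.verts, μH l = 0)
    (hHtotal : ∑ l ∈ Orderings H.verts, μH l = 1)
    (hpull : ∀ φ ∈ Embs H G, ∀ ordH ∈ Orderings H.verts,
      μH ordH = ∑ ordG ∈ (Orderings G.verts).filter (fun l => Preserves H φ ordH l),
        μG ordG) :
    (1 / 2) * ∑ ordH ∈ Orderings H.verts, |μH ordH - ((k.factorial : ℝ))⁻¹|
      ≤ δ * (k.factorial : ℝ) / 2 := by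
  classical
  have hfin : (Embs H G).Finite := by
    by_contra h
    have : Nind H G = 0 := Set.Infinite.ncard h
    omega
  set E := hfin.toFinset with hE
  have hNind : Nind H G = E.card := by
    rw [Nind, Set.ncard_eq_toFinset_card _ hfin]
  have hNpos : (0:ℝ) < (Nind H G : ℝ) := by exact_mod_cast hpos
  have hNord : ∀ ordH ordG, Nord H G ordH ordG
      = (E.filter (fun φ => Preserves H φ ordH ordG)).card := by
    intro ordH ordG
    rw [Nord]
    have hset : {φ ∈ Embs H G | Preserves H φ ordH ordG}
        = ↑(E.filter (fun φ => Preserves H φ ordH ordG)) := by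
      ext φ
      simp [hE, Set.Finite.mem_toFinset]
    rw [hset, Set.ncard_coe_finset]
  have hmu : ∀ ordH ∈ Orderings H.verts, (Nind H G : ℝ) * μH ordH
      = ∑ ordG ∈ Orderings G.verts, (Nord H G ordH ordG : ℝ) * μG ordG := by
    intro ordH hordH
    calc (Nind H G : ℝ) * μH ordH = ∑ _φ ∈ E, μH ordH := by
          rw [Finset.sum_const, nsmul_eq_mul, hNind]
      _ = ∑ φ ∈ E, ∑ ordG ∈ (Orderings G.verts).filter
            (fun l => Preserves H φ ordH l), μG ordG := by
          refine Finset.sum_congr rfl fun φ hφ => ?_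
          exact hpull φ (hfin.mem_toFinset.mp hφ) ordH hordH
      _ = ∑ φ ∈ E, ∑ ordG ∈ Orderings G.verts,
            if Preserves H φ ordH ordG then μG ordG else 0 := by
          simp [Finset.sum_filter]
      _ = ∑ ordG ∈ Orderings G.verts, ∑ φ ∈ E,
            if Preserves H φ ordH ordG then μG ordG else 0 := Finset.sum_comm
      _ = ∑ ordG ∈ Orderings G.verts, (Nord H G ordH ordG : ℝ) * μG ordG := by
          refine Finset.sum_congr rfl fun ordG _ => ?_
          rw [← Finset.sum_filter, Finset.sum_const, nsmul_eq_mul, hNord]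
  have key : ∀ ordH ∈ Orderings H.verts,
      |μH ordH - ((k.factorial : ℝ))⁻¹| ≤ δ := by
    intro ordH hordH
    have h2 : μH ordH = ∑ ordG ∈ Orderings G.verts,
        μG ordG * ((Nord H G ordH ordG : ℝ) / (Nind H G : ℝ)) := by
      have hne : (Nind H G : ℝ) ≠ 0 := ne_of_gt hNpos
      rw [eq_comm]
      calc ∑ ordG ∈ Orderings G.verts,
            μG ordG * ((Nord H G ordH ordG : ℝ) / (Nind H G : ℝ))
          = (∑ ordG ∈ Orderings G.verts, (Nord H G ordH ordG : ℝ) * μG ordG)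
              / (Nind H G : ℝ) := by
            rw [Finset.sum_div]
            exact Finset.sum_congr rfl fun ordG _ => by ring
        _ = μH ordH := by rw [← hmu ordH hordH, mul_div_cancel_left₀ _ hne]
    have h3 : μH ordH - ((k.factorial : ℝ))⁻¹ = ∑ ordG ∈ Orderings G.verts,
        μG ordG * ((Nord H G ordH ordG : ℝ) / (Nind H G : ℝ)
          - ((k.factorial : ℝ))⁻¹) := by
      rw [h2]
      simp only [mul_sub, Finset.sum_sub_distrib, ← Finset.sum_mul, hGtotal, one_mul]
    rw [h3]
    calc |∑ ordG ∈ Orderings G.verts, μG ordG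
          * ((Nord H G ordH ordG : ℝ) / (Nind H G : ℝ) - ((k.factorial : ℝ))⁻¹)|
        ≤ ∑ ordG ∈ Orderings G.verts, |μG ordG
          * ((Nord H G ordH ordG : ℝ) / (Nind H G : ℝ) - ((k.factorial : ℝ))⁻¹)| :=
          Finset.abs_sum_le_sum_abs _ _
      _ ≤ ∑ ordG ∈ Orderings G.verts, μG ordG * δ := by
          refine Finset.sum_le_sum fun ordG hordG => ?_
          rw [abs_mul, abs_of_nonneg (hGnonneg ordG)]
          exact mul_le_mul_of_nonneg_left (hbd ordG hordG ordH hordH) (hGnonneg ordG)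
      _ = δ := by rw [← Finset.sum_mul, hGtotal, one_mul]
  have hcard : (Orderings H.verts).card = k.factorial := by
    rw [Orderings, List.toFinset_card_of_nodup
      (List.nodup_permutations _ (Finset.sort_nodup _ _)),
      List.length_permutations, Finset.length_sort, hk]
  have hsum : ∑ ordH ∈ Orderings H.verts, |μH ordH - ((k.factorial : ℝ))⁻¹|
      ≤ (k.factorial : ℝ) * δ := by
    calc ∑ ordH ∈ Orderings H.verts, |μH ordH - ((k.factorial : ℝ))⁻¹|
        ≤ ∑ _ordH ∈ Orderings H.verts, δ := Finset.sum_le_sum key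
      _ = (k.factorial : ℝ) * δ := by rw [Finset.sum_const, hcard, nsmul_eq_mul]
  linarith
end

section
/- Let r ≥ 2 and g ≥ 3 be integers. There is a constant C = C(r,g) > 0 such that for all n ≥ r, there exists an r-uniform hypergraph on n vertices with at least C·n^{(g-1)/(g-2)} hyperedges and girth at least g. -/
open Finset

/-- `G` contains a cycle of length `L`: an alternating sequence
`x 0, e 0, x 1, e 1, …, x (L-1), e (L-1), x L` of vertices and hyperedges with
`x i ≠ x (i+1)`, `x i, x (i+1) ∈ e i`, consecutive hyperedges distinct, `L ≥ 2`,
and `x 0 = x L`. -/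
def FinHypergraph.HasCycleOfLength {r : ℕ} (G : FinHypergraph r) (L : ℕ) : Prop :=
  2 ≤ L ∧ ∃ x : ℕ → ℕ, ∃ e : ℕ → Finset ℕ,
    (∀ i < L, e i ∈ G.edges) ∧
    (∀ i < L, x i ≠ x (i + 1)) ∧
    (∀ i < L, x i ∈ e i ∧ x (i + 1) ∈ e i) ∧
    (∀ i, i + 1 < L → e i ≠ e (i + 1)) ∧
    x 0 = x L

/-- `G` has girth at least `g`: every cycle has length at least `g`. -/
def FinHypergraph.GirthGE {r : ℕ} (G : FinHypergraph r) (g : ℕ) : Prop :=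
  ∀ L : ℕ, G.HasCycleOfLength L → g ≤ L


namespace UEHelper

/-- cyclic successor -/
def wsucc {L : ℕ} (i : Fin L) : Fin L := ⟨(i.val + 1) % L, Nat.mod_lt _ i.pos⟩

/-- witnesses of cycles of length `L` with injective edge sequence, edges in `S`,
vertices in `V` -/
def Wit (V : Finset ℕ) (L : ℕ) (S : Finset (Finset ℕ)) :
    Finset ((Fin L → ℕ) × (Fin L → Finset ℕ)) :=
  ((Fintype.piFinset fun _ : Fin L => V) ×ˢ (Fintype.piFinset fun _ : Fin L => S)).filter
    (fun w => Function.Injective w.2 ∧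
      ∀ i : Fin L, w.1 i ∈ w.2 i ∧ w.1 (wsucc i) ∈ w.2 i ∧ w.1 i ≠ w.1 (wsucc i))

lemma mem_Wit {V : Finset ℕ} {L : ℕ} {S : Finset (Finset ℕ)}
    {w : (Fin L → ℕ) × (Fin L → Finset ℕ)} :
    w ∈ Wit V L S ↔ (∀ i, w.1 i ∈ V) ∧ (∀ i, w.2 i ∈ S) ∧ Function.Injective w.2 ∧
      ∀ i : Fin L, w.1 i ∈ w.2 i ∧ w.1 (wsucc i) ∈ w.2 i ∧ w.1 i ≠ w.1 (wsucc i) := by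
  simp only [Wit, mem_filter, mem_product, Fintype.mem_piFinset]
  tauto

lemma Wit_mono {V : Finset ℕ} {L : ℕ} {S S' : Finset (Finset ℕ)} (h : S ⊆ S') :
    Wit V L S ⊆ Wit V L S' := by
  intro w hw
  rw [mem_Wit] at hw ⊢
  exact ⟨hw.1, fun i => h (hw.2.1 i), hw.2.2⟩

lemma Wit_eq_filter {V : Finset ℕ} {L : ℕ} {S T : Finset (Finset ℕ)} (hST : S ⊆ T) :
    Wit V L S = (Wit V L T).filter (fun w => Finset.image w.2 Finset.univ ⊆ S) := by
  ext w
  rw [mem_filter, mem_Wit, mem_Wit]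
  constructor
  · intro h
    refine ⟨⟨h.1, fun i => hST (h.2.1 i), h.2.2⟩, ?_⟩
    intro E hE
    simp only [Finset.mem_image, Finset.mem_univ] at hE
    obtain ⟨i, _, rfl⟩ := hE
    exact h.2.1 i
  · rintro ⟨h, hsub⟩
    refine ⟨h.1, fun i => hsub ?_, h.2.2⟩
    exact Finset.mem_image_of_mem _ (Finset.mem_univ i)

lemma insert_insert_erase_erase {e : Finset ℕ} {a b : ℕ} (ha : a ∈ e) (hb : b ∈ e)
    (hab : a ≠ b) : insert a (insert b ((e.erase a).erase b)) = e := by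
  rw [Finset.insert_erase (Finset.mem_erase.2 ⟨(Ne.symm hab), hb⟩), Finset.insert_erase ha]

lemma Wit_card_le {r : ℕ} (hr : 2 ≤ r) (V : Finset ℕ) (L : ℕ) (S : Finset (Finset ℕ))
    (hS : S ⊆ Finset.powersetCard r V) :
    (Wit V L S).card ≤ (V.card ^ (r - 1)) ^ L := by
  classical
  have hmain : (Wit V L S).card ≤
      ((Fintype.piFinset fun _ : Fin L => V) ×ˢ
        (Fintype.piFinset fun _ : Fin L => Finset.powersetCard (r - 2) V)).card := by
    apply Finset.card_le_card_of_injOn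
      (fun w => (w.1, fun i => ((w.2 i).erase (w.1 i)).erase (w.1 (wsucc i))))
    · intro w hw
      rw [Finset.mem_coe, mem_Wit] at hw
      rw [Finset.mem_coe, Finset.mem_product, Fintype.mem_piFinset, Fintype.mem_piFinset]
      refine ⟨fun i => hw.1 i, fun i => ?_⟩
      obtain ⟨h1, h2, h3⟩ := hw.2.2.2 i
      have heS := hS (hw.2.1 i)
      rw [Finset.mem_powersetCard] at heS
      rw [Finset.mem_powersetCard]
      constructor
      · intro a haa
        exact heS.1 (Finset.erase_subset _ _ (Finset.erase_subset _ _ haa))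
      · rw [Finset.card_erase_of_mem (Finset.mem_erase.2 ⟨Ne.symm h3, h2⟩),
          Finset.card_erase_of_mem h1, heS.2]
        omega
    · intro w hw w' hw' heq
      rw [Finset.mem_coe, mem_Wit] at hw hw'
      simp only [Prod.mk.injEq] at heq
      obtain ⟨hx, he⟩ := heq
      ext1
      · exact hx
      · funext i
        obtain ⟨h1, h2, h3⟩ := hw.2.2.2 i
        obtain ⟨h1', h2', h3'⟩ := hw'.2.2.2 i
        have := congrFun he i
        calc w.2 i = insert (w.1 i) (insert (w.1 (wsucc i)) (((w.2 i).erase (w.1 i)).erase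
            (w.1 (wsucc i)))) := (insert_insert_erase_erase h1 h2 h3).symm
        _ = insert (w'.1 i) (insert (w'.1 (wsucc i)) (((w'.2 i).erase (w'.1 i)).erase
            (w'.1 (wsucc i)))) := by rw [this, hx]
        _ = w'.2 i := insert_insert_erase_erase h1' h2' h3'
  refine hmain.trans ?_
  rw [Finset.card_product, Fintype.card_piFinset, Fintype.card_piFinset]
  simp only [Finset.card_powersetCard, Finset.prod_const, Finset.card_univ, Fintype.card_fin]
  have h1 : V.card.choose (r - 2) ≤ V.card ^ (r - 2) := Nat.choose_le_pow _ _
  calc V.card ^ L * (V.card.choose (r - 2)) ^ L ≤ V.card ^ L * (V.card ^ (r - 2)) ^ L :=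
        Nat.mul_le_mul_left _ (Nat.pow_le_pow_left h1 L)
    _ = (V.card ^ (r - 1)) ^ L := by
        rw [← mul_pow]
        congr 1
        rw [← pow_succ']
        congr 1
        omega

end UEHelper


namespace UEHelper

variable {α β : Type*} [DecidableEq α]

lemma sum_pow_mul (A : Finset α) (p q : ℝ) :
    ∑ S ∈ A.powerset, p ^ S.card * q ^ (A.card - S.card) = (p + q) ^ A.card := by
  have := Finset.prod_add (fun _ : α => p) (fun _ : α => q) A
  simp only [Finset.prod_const] at this
  rw [this]
  apply Finset.sum_congr rfl
  intro S hS
  rw [Finset.mem_powerset] at hS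
  rw [Finset.card_sdiff_of_subset hS]

lemma sum_pow_mul_filter (A T : Finset α) (hT : T ⊆ A) (p q : ℝ) :
    ∑ S ∈ A.powerset.filter (fun S => T ⊆ S), p ^ S.card * q ^ (A.card - S.card)
      = p ^ T.card * (p + q) ^ (A.card - T.card) := by
  rw [← Finset.card_sdiff_of_subset hT, ← sum_pow_mul (A \ T) p q, Finset.mul_sum]
  apply Finset.sum_nbij' (fun S => S \ T) (fun S => S ∪ T)
  · intro S hS
    rw [Finset.mem_filter, Finset.mem_powerset] at hS
    rw [Finset.mem_powerset]
    exact Finset.sdiff_subset_sdiff hS.1 (Finset.Subset.refl T)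
  · intro S hS
    rw [Finset.mem_powerset] at hS
    rw [Finset.mem_filter, Finset.mem_powerset]
    exact ⟨Finset.union_subset (hS.trans Finset.sdiff_subset) hT, Finset.subset_union_right⟩
  · intro S hS
    rw [Finset.mem_filter, Finset.mem_powerset] at hS
    exact Finset.sdiff_union_of_subset hS.2
  · intro S hS
    rw [Finset.mem_powerset] at hS
    apply Finset.union_sdiff_cancel_right
    exact Finset.disjoint_left.2 fun a ha => (Finset.mem_sdiff.1 (hS ha)).2
  · intro S hS
    rw [Finset.mem_filter, Finset.mem_powerset] at hS
    have hdisj : Disjoint (S \ T) T := Finset.sdiff_disjoint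
    have hcard : S.card = (S \ T).card + T.card := by
      rw [← Finset.card_union_of_disjoint hdisj, Finset.sdiff_union_of_subset hS.2]
    have hTA : T.card ≤ A.card := Finset.card_le_card hT
    have hSA : S.card ≤ A.card := Finset.card_le_card hS.1
    rw [hcard, pow_add]
    have : A.card - ((S \ T).card + T.card) = A.card - T.card - (S \ T).card := by omega
    rw [this, Finset.card_sdiff_of_subset hT]
    ring

/-- expectation of the number of elements of `B` whose requirement `m b ⊆ S` is met,
under the binomial distribution on subsets `S ⊆ A`. -/
lemma expectation_count (A : Finset α) (B : Finset β) (m : β → Finset α)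
    (hm : ∀ b ∈ B, m b ⊆ A) (p : ℝ) :
    ∑ S ∈ A.powerset, (p ^ S.card * (1 - p) ^ (A.card - S.card)) *
        ((B.filter (fun b => m b ⊆ S)).card : ℝ)
      = ∑ b ∈ B, p ^ (m b).card * (p + (1 - p)) ^ (A.card - (m b).card) := by
  have hswap : ∀ S : Finset α,
      ((B.filter (fun b => m b ⊆ S)).card : ℝ) = ∑ b ∈ B, if m b ⊆ S then (1:ℝ) else 0 := by
    intro S
    rw [Finset.sum_boole]
  calc ∑ S ∈ A.powerset, (p ^ S.card * (1 - p) ^ (A.card - S.card)) *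
        ((B.filter (fun b => m b ⊆ S)).card : ℝ)
      = ∑ S ∈ A.powerset, ∑ b ∈ B, (if m b ⊆ S then
          p ^ S.card * (1 - p) ^ (A.card - S.card) else 0) := by
        apply Finset.sum_congr rfl
        intro S _
        rw [hswap, Finset.mul_sum]
        apply Finset.sum_congr rfl
        intro b _
        split <;> simp
    _ = ∑ b ∈ B, ∑ S ∈ A.powerset, (if m b ⊆ S then
          p ^ S.card * (1 - p) ^ (A.card - S.card) else 0) := Finset.sum_comm
    _ = ∑ b ∈ B, p ^ (m b).card * (p + (1 - p)) ^ (A.card - (m b).card) := by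
        apply Finset.sum_congr rfl
        intro b hb
        rw [← Finset.sum_filter]
        exact sum_pow_mul_filter A (m b) (hm b hb) p (1 - p)


end UEHelper

namespace UEHelper

lemma extract (V : Finset ℕ) (S : Finset (Finset ℕ)) (hSV : ∀ E ∈ S, E ⊆ V) :
    ∀ L₀ : ℕ, 2 ≤ L₀ →
    (∃ x : ℕ → ℕ, ∃ e : ℕ → Finset ℕ,
      (∀ i < L₀, e i ∈ S) ∧ (∀ i < L₀, x i ≠ x (i + 1)) ∧
      (∀ i < L₀, x i ∈ e i ∧ x (i + 1) ∈ e i) ∧ (∀ i, i + 1 < L₀ → e i ≠ e (i + 1)) ∧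
      x 0 = x L₀) →
    ∃ L, 2 ≤ L ∧ L ≤ L₀ ∧ (Wit V L S).Nonempty := by
  intro L₀
  induction L₀ using Nat.strong_induction_on with
  | _ L₀ IH =>
  rintro hL₀ ⟨x, e, he, hxne, hinc, hee, hcl⟩
  by_cases hA : ∃ a b, a < b ∧ b ≤ L₀ ∧ ¬(a = 0 ∧ b = L₀) ∧ x a = x b
  · -- repeated vertex: shorten the cycle
    obtain ⟨a, b, hab, hbL, hnot, hxab⟩ := hA
    have hab2 : a + 2 ≤ b := by
      by_contra h
      have hb : b = a + 1 := by omega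
      exact hxne a (by omega) (hb ▸ hxab)
    have hM2 : 2 ≤ b - a := by omega
    have hMlt : b - a < L₀ := by omega
    have c1 : ∀ i < b - a, (fun i => e (a + i)) i ∈ S := by
      intro i hi; exact he _ (by omega)
    have c2 : ∀ i < b - a, (fun i => x (a + i)) i ≠ (fun i => x (a + i)) (i + 1) := by
      intro i hi
      simp only
      have h' : a + (i + 1) = a + i + 1 := by omega
      rw [h']
      exact hxne _ (by omega)
    have c3 : ∀ i < b - a, (fun i => x (a + i)) i ∈ (fun i => e (a + i)) i ∧
        (fun i => x (a + i)) (i + 1) ∈ (fun i => e (a + i)) i := by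
      intro i hi
      simp only
      have h' : a + (i + 1) = a + i + 1 := by omega
      rw [h']
      exact hinc _ (by omega)
    have c4 : ∀ i, i + 1 < b - a → (fun i => e (a + i)) i ≠ (fun i => e (a + i)) (i + 1) := by
      intro i hi
      simp only
      have h' : a + (i + 1) = a + i + 1 := by omega
      rw [h']
      exact hee _ (by omega)
    have c5 : (fun i => x (a + i)) 0 = (fun i => x (a + i)) (b - a) := by
      simp only
      have h1 : a + 0 = a := by omega
      have h2 : a + (b - a) = b := by omega
      rw [h1, h2]
      exact hxab
    obtain ⟨L, h2, hle, hne⟩ := IH (b - a) hMlt hM2 ⟨_, _, c1, c2, c3, c4, c5⟩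
    exact ⟨L, h2, by omega, hne⟩
  · push_neg at hA
    by_cases hB : ∃ a b, a < b ∧ b < L₀ ∧ e a = e b
    · -- repeated edge: shorten the cycle
      obtain ⟨a, b, hab, hbL, heab⟩ := hB
      have hab2 : a + 2 ≤ b := by
        by_contra h
        have hb : b = a + 1 := by omega
        exact hee a (by omega) (hb ▸ heab)
      set M := b - a with hM
      have hM2 : 2 ≤ M := by omega
      have hMlt : M < L₀ := by omega
      set y : ℕ → ℕ := fun i => if i = M then x (a + 1) else x (a + 1 + i) with hy
      set f : ℕ → Finset ℕ := fun i => e (a + 1 + i) with hf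
      have c1 : ∀ i < M, f i ∈ S := by
        intro i hi; exact he _ (by omega)
      have c2 : ∀ i < M, y i ≠ y (i + 1) := by
        intro i hi
        rw [hy]
        by_cases h1 : i + 1 = M
        · simp only [if_neg (by omega : ¬ i = M), if_pos h1]
          have hib : a + 1 + i = b := by omega
          rw [hib]
          intro h
          exact hA (a + 1) b (by omega) (by omega) (by omega) h.symm
        · simp only [if_neg (by omega : ¬ i = M), if_neg h1]
          have : a + 1 + (i + 1) = a + 1 + i + 1 := by omega
          rw [this]
          exact hxne _ (by omega)
      have c3 : ∀ i < M, y i ∈ f i ∧ y (i + 1) ∈ f i := by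
        intro i hi
        rw [hy, hf]
        constructor
        · simp only [if_neg (by omega : ¬ i = M)]
          exact (hinc _ (by omega)).1
        · by_cases h1 : i + 1 = M
          · simp only [if_pos h1]
            have hib : a + 1 + i = b := by omega
            rw [hib, ← heab]
            exact (hinc a (by omega)).2
          · simp only [if_neg h1]
            have : a + 1 + (i + 1) = a + 1 + i + 1 := by omega
            rw [this]
            exact (hinc _ (by omega)).2
      have c4 : ∀ i, i + 1 < M → f i ≠ f (i + 1) := by
        intro i hi
        rw [hf]
        simp only
        have h' : a + 1 + (i + 1) = a + 1 + i + 1 := by omega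
        rw [h']
        exact hee _ (by omega)
      have c5 : y 0 = y M := by
        rw [hy]
        simp only
        rw [if_neg (by omega : ¬ (0:ℕ) = M)]
        simp
      obtain ⟨L, h2, hle, hne⟩ := IH M hMlt hM2 ⟨y, f, c1, c2, c3, c4, c5⟩
      exact ⟨L, h2, by omega, hne⟩
    · -- all vertices and edges distinct: build a witness of length L₀
      push_neg at hB
      refine ⟨L₀, hL₀, le_refl _, ⟨(fun i => x i.val, fun i => e i.val), ?_⟩⟩
      rw [mem_Wit]
      refine ⟨?_, ?_, ?_, ?_⟩
      · intro i
        exact hSV _ (he _ i.isLt) (hinc _ i.isLt).1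
      · intro i
        exact he _ i.isLt
      · intro i j hij
        simp only at hij
        rcases lt_trichotomy i.val j.val with h | h | h
        · exact absurd hij (hB _ _ h j.isLt)
        · exact Fin.ext h
        · exact absurd hij.symm (hB _ _ h i.isLt)
      · intro i
        have hiL : i.val < L₀ := i.isLt
        have hws : (wsucc i).val = (i.val + 1) % L₀ := rfl
        by_cases h1 : i.val + 1 < L₀
        · have hv : (wsucc i).val = i.val + 1 := by
            rw [hws, Nat.mod_eq_of_lt h1]
          simp only
          rw [hv]
          exact ⟨(hinc _ hiL).1, (hinc _ hiL).2, hxne _ hiL⟩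
        · have hL : i.val + 1 = L₀ := by omega
          have hv : (wsucc i).val = 0 := by
            rw [hws, hL, Nat.mod_self]
          simp only
          rw [hv]
          have hx0 : x 0 = x (i.val + 1) := by rw [hcl, hL]
          refine ⟨(hinc _ hiL).1, ?_, ?_⟩
          · rw [hx0]; exact (hinc _ hiL).2
          · intro h
            exact hA 0 i.val (by omega) (by omega) (by omega) h.symm

end UEHelper

open UEHelper

/-- Dense hypergraphs of large girth: for `r ≥ 2` and `g ≥ 3` there is a constant
`C = C(r,g) > 0` such that for all `n ≥ r` there is an `r`-uniform hypergraph on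
`n` vertices with at least `C·n^((g-1)/(g-2))` hyperedges and girth at least `g`. -/
theorem uniqueErgodicity.stmt8 (r g : ℕ) (hr : 2 ≤ r) (hg : 3 ≤ g) :
    ∃ C : ℝ, 0 < C ∧ ∀ n : ℕ, r ≤ n →
      ∃ G : FinHypergraph r, G.verts.card = n ∧
        C * (n : ℝ) ^ (((g : ℝ) - 1) / ((g : ℝ) - 2)) ≤ (G.edges.card : ℝ) ∧
        G.GirthGE g := by
  classical
  -- constants
  set Kr : ℝ := (r : ℝ) ^ r * (r.factorial : ℝ) with hKrdef
  have hKr1 : (1 : ℝ) ≤ Kr := by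
    have h1 : (1:ℝ) ≤ (r:ℝ) ^ r := one_le_pow₀ (by exact_mod_cast Nat.one_le_iff_ne_zero.2 (by omega))
    have h2 : (1:ℝ) ≤ (r.factorial : ℝ) := by exact_mod_cast r.factorial_pos
    nlinarith
  have hKrpos : (0 : ℝ) < Kr := lt_of_lt_of_le one_pos hKr1
  set c : ℝ := 1 / (2 * (g : ℝ) * Kr) with hcdef
  have hgR : (3 : ℝ) ≤ (g : ℝ) := by exact_mod_cast hg
  have hgKr : (1 : ℝ) ≤ 2 * (g : ℝ) * Kr := by nlinarith
  have hcpos : 0 < c := by rw [hcdef]; positivity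
  have hc1 : c ≤ 1 := by
    rw [hcdef]
    exact (div_le_one (by linarith)).2 hgKr
  have hgc : (g : ℝ) * c = 1 / (2 * Kr) := by
    rw [hcdef]
    field_simp
  refine ⟨c / (2 * Kr), by positivity, ?_⟩
  intro n hn
  -- basic numbers
  have hn2 : 2 ≤ n := le_trans hr hn
  have hnR1 : (1 : ℝ) ≤ (n : ℝ) := by exact_mod_cast le_trans one_le_two (by exact_mod_cast hn2)
  have hnRpos : (0 : ℝ) < (n : ℝ) := lt_of_lt_of_le one_pos hnR1
  have hg2R : (1 : ℝ) ≤ (g : ℝ) - 2 := by linarith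
  have hg2ne : ((g : ℝ) - 2) ≠ 0 := by linarith
  set a : ℝ := 1 / ((g : ℝ) - 2) with hadef
  have hapos : 0 < a := by rw [hadef]; positivity
  have ha1 : a ≤ 1 := by
    rw [hadef]
    exact (div_le_one (by linarith)).2 hg2R
  set β : ℝ := ((g : ℝ) - 1) / ((g : ℝ) - 2) with hβdef
  have haβ : a + 1 = β := by
    rw [hadef, hβdef]
    field_simp
    ring
  have haβ' : a * ((g : ℝ) - 1) = β := by
    rw [hadef, hβdef, one_div_mul_eq_div]
  -- the vertex set and complete edge set
  set V : Finset ℕ := Finset.range n with hVdef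
  have hVcard : V.card = n := Finset.card_range n
  set K : Finset (Finset ℕ) := Finset.powersetCard r V with hKdef
  set N : ℕ := K.card with hNdef
  have hNchoose : N = n.choose r := by rw [hNdef, hKdef, Finset.card_powersetCard, hVcard]
  -- the probability
  set p : ℝ := c * (n : ℝ) ^ (a - ((r : ℝ) - 1)) with hpdef
  have hrpowpos : (0:ℝ) < (n : ℝ) ^ (a - ((r : ℝ) - 1)) := Real.rpow_pos_of_pos hnRpos _
  have hppos : 0 < p := by rw [hpdef]; positivity
  have hrpow1 : (n : ℝ) ^ (a - ((r : ℝ) - 1)) ≤ 1 := by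
    apply Real.rpow_le_one_of_one_le_of_nonpos hnR1
    have : (2:ℝ) ≤ (r:ℝ) := by exact_mod_cast hr
    linarith
  have hpc : p ≤ c := by
    rw [hpdef]
    nlinarith
  have hp1 : p < 1 := by
    have hclt : c < 1 := by
      rw [hcdef]
      rw [div_lt_one (by linarith)]
      nlinarith
    linarith
  have hq0 : 0 < 1 - p := by linarith
  -- weight function
  set w : Finset (Finset ℕ) → ℝ := fun S => p ^ S.card * (1 - p) ^ (N - S.card) with hwdef
  have hwpos : ∀ S, 0 < w S := fun S => mul_pos (pow_pos hppos _) (pow_pos hq0 _)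
  have hpq : p + (1 - p) = 1 := by ring
  have hwsum : ∑ S ∈ K.powerset, w S = 1 := by
    rw [hwdef]
    simp only
    rw [hNdef, sum_pow_mul K p (1 - p), hpq, one_pow]
  -- expectation of the number of edges
  have hE1 : ∑ S ∈ K.powerset, w S * (S.card : ℝ) = (N : ℝ) * p := by
    have h := expectation_count K K (fun E => ({E} : Finset (Finset ℕ)))
      (fun E hE => Finset.singleton_subset_iff.2 hE) p
    rw [hpq] at h
    simp only [Finset.card_singleton, pow_one, one_pow, mul_one] at h
    rw [← hNdef] at h
    calc ∑ S ∈ K.powerset, w S * (S.card : ℝ)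
        = ∑ S ∈ K.powerset, (p ^ S.card * (1 - p) ^ (N - S.card)) *
            ((K.filter (fun E => ({E} : Finset (Finset ℕ)) ⊆ S)).card : ℝ) := by
          apply Finset.sum_congr rfl
          intro S hS
          rw [Finset.mem_powerset] at hS
          have hfk : K.filter (fun E => ({E} : Finset (Finset ℕ)) ⊆ S) = S := by
            ext E
            rw [Finset.mem_filter, Finset.singleton_subset_iff]
            exact ⟨fun h => h.2, fun h => ⟨hS h, h⟩⟩
          rw [hfk, hwdef]
      _ = ∑ _E ∈ K, p := h
      _ = (N : ℝ) * p := by rw [Finset.sum_const, nsmul_eq_mul, hNdef]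
  -- expectation of the number of witnesses of length L
  have hE2 : ∀ L : ℕ, ∑ S ∈ K.powerset, w S * ((Wit V L S).card : ℝ)
      = ((Wit V L K).card : ℝ) * p ^ L := by
    intro L
    have hm : ∀ b ∈ Wit V L K, Finset.image b.2 Finset.univ ⊆ K := by
      intro b hb E hE
      simp only [Finset.mem_image, Finset.mem_univ] at hE
      obtain ⟨i, _, rfl⟩ := hE
      exact (mem_Wit.1 hb).2.1 i
    have hcnt := expectation_count K (Wit V L K) (fun b => Finset.image b.2 Finset.univ) hm p
    rw [hpq] at hcnt
    simp only [one_pow, mul_one] at hcnt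
    rw [← hNdef] at hcnt
    have hL : ∀ b ∈ Wit V L K, (Finset.image b.2 Finset.univ).card = L := by
      intro b hb
      rw [Finset.card_image_of_injective _ (mem_Wit.1 hb).2.2.1, Finset.card_univ,
        Fintype.card_fin]
    calc ∑ S ∈ K.powerset, w S * ((Wit V L S).card : ℝ)
        = ∑ S ∈ K.powerset, (p ^ S.card * (1 - p) ^ (N - S.card)) * (((Wit V L K).filter
            (fun b => Finset.image b.2 Finset.univ ⊆ S)).card : ℝ) := by
          apply Finset.sum_congr rfl
          intro S hS
          rw [Finset.mem_powerset] at hS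
          rw [Wit_eq_filter hS, hwdef]
      _ = ∑ b ∈ Wit V L K, p ^ (Finset.image b.2 Finset.univ).card := hcnt
      _ = ∑ _b ∈ Wit V L K, p ^ L := Finset.sum_congr rfl (fun b hb => by rw [hL b hb])
      _ = ((Wit V L K).card : ℝ) * p ^ L := by rw [Finset.sum_const, nsmul_eq_mul]
  -- target value
  set T : ℝ := c / (2 * Kr) * (n : ℝ) ^ β with hTdef
  have hTpos : 0 < T := by
    rw [hTdef]
    have := Real.rpow_pos_of_pos hnRpos β
    positivity
  -- lower bound for N * p
  have hNKr : ((n : ℝ)) ^ (r : ℕ) ≤ (N : ℝ) * Kr := by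
    have h1 : n ^ r ≤ n.choose r * (r.factorial * r ^ r) := by
      have hstep : n ≤ r * (n + 1 - r) := by
        have h2 : n + 1 - r = n - r + 1 := by omega
        rw [h2, Nat.mul_add, Nat.mul_one]
        have := Nat.le_mul_of_pos_left (n - r) (show 0 < r by omega)
        omega
      calc n ^ r ≤ (r * (n + 1 - r)) ^ r := Nat.pow_le_pow_left hstep r
        _ = r ^ r * (n + 1 - r) ^ r := by rw [Nat.mul_pow]
        _ ≤ r ^ r * n.descFactorial r := by
            exact Nat.mul_le_mul_left _ (n.pow_sub_le_descFactorial r)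
        _ = r ^ r * (r.factorial * n.choose r) := by
            rw [Nat.descFactorial_eq_factorial_mul_choose]
        _ = n.choose r * (r.factorial * r ^ r) := by ring
    have h2 : ((n : ℝ)) ^ (r:ℕ) ≤ ((n.choose r : ℝ)) * ((r.factorial : ℝ) * (r:ℝ) ^ r) := by
      exact_mod_cast h1
    rw [hNchoose, hKrdef]
    calc ((n : ℝ)) ^ (r:ℕ) ≤ (n.choose r : ℝ) * ((r.factorial : ℝ) * (r:ℝ) ^ r) := h2
      _ = (n.choose r : ℝ) * ((r : ℝ) ^ r * (r.factorial : ℝ)) := by ring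
  have hNp : c / Kr * (n : ℝ) ^ β ≤ (N : ℝ) * p := by
    have hrpow_combine : (n : ℝ) ^ (a - ((r : ℝ) - 1)) * (n : ℝ) ^ ((r:ℕ) : ℝ) = (n : ℝ) ^ β := by
      rw [← Real.rpow_add hnRpos]
      congr 1
      push_cast
      rw [← haβ]
      ring
    have key : (n : ℝ) ^ β ≤ (N : ℝ) * Kr * (n : ℝ) ^ (a - ((r : ℝ) - 1)) := by
      calc (n : ℝ) ^ β = (n : ℝ) ^ (a - ((r : ℝ) - 1)) * (n : ℝ) ^ ((r:ℕ) : ℝ) :=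
            hrpow_combine.symm
        _ ≤ (n : ℝ) ^ (a - ((r : ℝ) - 1)) * ((N : ℝ) * Kr) := by
            apply mul_le_mul_of_nonneg_left _ (le_of_lt hrpowpos)
            rw [Real.rpow_natCast]
            exact hNKr
        _ = (N : ℝ) * Kr * (n : ℝ) ^ (a - ((r : ℝ) - 1)) := by ring
    rw [hpdef]
    rw [div_mul_eq_mul_div, div_le_iff₀ hKrpos]
    calc c * (n:ℝ) ^ β ≤ c * ((N : ℝ) * Kr * (n : ℝ) ^ (a - ((r : ℝ) - 1))) :=
          mul_le_mul_of_nonneg_left key (le_of_lt hcpos)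
      _ = (N:ℝ) * (c * (n:ℝ) ^ (a - ((r : ℝ) - 1))) * Kr := by ring
  -- upper bound for the expected number of witnesses
  have hbadL : ∀ L ∈ Finset.Icc 2 (g - 1),
      ((Wit V L K).card : ℝ) * p ^ L ≤ c ^ 2 * (n : ℝ) ^ β := by
    intro L hL
    rw [Finset.mem_Icc] at hL
    have hcard : ((Wit V L K).card : ℝ) ≤ ((n:ℝ) ^ (r - 1 : ℕ)) ^ L := by
      have := Wit_card_le hr V L K (Finset.Subset.refl _)
      rw [hVcard] at this
      exact_mod_cast this
    have hterm : ((Wit V L K).card : ℝ) * p ^ L ≤ ((n:ℝ) ^ (r - 1 : ℕ) * p) ^ L := by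
      rw [mul_pow ((n:ℝ) ^ (r - 1 : ℕ)) p L]
      exact mul_le_mul_of_nonneg_right hcard (pow_nonneg (le_of_lt hppos) L)
    have hid : (n:ℝ) ^ (r - 1 : ℕ) * p = c * (n:ℝ) ^ a := by
      rw [hpdef]
      have hcast : ((r - 1 : ℕ) : ℝ) = (r : ℝ) - 1 := by
        have h1r : 1 ≤ r := by omega
        push_cast [h1r]
        ring
      rw [← Real.rpow_natCast (n:ℝ) (r-1), hcast, ← mul_assoc, mul_comm ((n:ℝ) ^ ((r:ℝ)-1)) c,
        mul_assoc, ← Real.rpow_add hnRpos]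
      congr 2
      ring
    have hfinal : (c * (n:ℝ) ^ a) ^ L ≤ c ^ 2 * (n : ℝ) ^ β := by
      rw [mul_pow c ((n:ℝ) ^ a) L]
      have h1 : c ^ L ≤ c ^ 2 := pow_le_pow_of_le_one (le_of_lt hcpos) hc1 hL.1
      have h2 : ((n:ℝ) ^ a) ^ L ≤ (n : ℝ) ^ β := by
        rw [← Real.rpow_natCast ((n:ℝ) ^ a) L, ← Real.rpow_mul (le_of_lt hnRpos)]
        apply Real.rpow_le_rpow_of_exponent_le hnR1
        rw [← haβ']
        apply mul_le_mul_of_nonneg_left _ (le_of_lt hapos)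
        have hLg : (L : ℝ) ≤ ((g - 1 : ℕ) : ℝ) := by exact_mod_cast hL.2
        have hcast : ((g - 1 : ℕ) : ℝ) = (g:ℝ) - 1 := by
          have h1g : 1 ≤ g := by omega
          push_cast [h1g]
          ring
        linarith [hcast ▸ hLg]
      calc c ^ L * ((n:ℝ) ^ a) ^ L ≤ c ^ 2 * ((n:ℝ) ^ a) ^ L := by
            apply mul_le_mul_of_nonneg_right h1
            positivity
        _ ≤ c ^ 2 * (n : ℝ) ^ β := by
            apply mul_le_mul_of_nonneg_left h2
            positivity
    calc ((Wit V L K).card : ℝ) * p ^ L ≤ ((n:ℝ) ^ (r - 1 : ℕ) * p) ^ L := hterm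
      _ = (c * (n:ℝ) ^ a) ^ L := by rw [hid]
      _ ≤ c ^ 2 * (n : ℝ) ^ β := hfinal
  have hbad : ∑ L ∈ Finset.Icc 2 (g - 1), ((Wit V L K).card : ℝ) * p ^ L
      ≤ (g : ℝ) * c ^ 2 * (n : ℝ) ^ β := by
    calc ∑ L ∈ Finset.Icc 2 (g - 1), ((Wit V L K).card : ℝ) * p ^ L
        ≤ ∑ _L ∈ Finset.Icc 2 (g - 1), c ^ 2 * (n : ℝ) ^ β := Finset.sum_le_sum hbadL
      _ = ((Finset.Icc 2 (g-1)).card : ℝ) * (c ^ 2 * (n : ℝ) ^ β) := by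
          rw [Finset.sum_const, nsmul_eq_mul]
      _ ≤ (g : ℝ) * (c ^ 2 * (n : ℝ) ^ β) := by
          apply mul_le_mul_of_nonneg_right _ (by positivity)
          rw [Nat.card_Icc]
          have hgg : (g - 1 + 1 - 2 : ℕ) ≤ g := by omega
          exact_mod_cast hgg
      _ = (g : ℝ) * c ^ 2 * (n : ℝ) ^ β := by ring
  -- the expectation of the quality functional is at least T
  set F : Finset (Finset ℕ) → ℝ := fun S =>
    (S.card : ℝ) - ∑ L ∈ Finset.Icc 2 (g - 1), ((Wit V L S).card : ℝ) with hFdef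
  have hEF : T ≤ ∑ S ∈ K.powerset, w S * F S := by
    have hsplit : ∑ S ∈ K.powerset, w S * F S
        = (N : ℝ) * p - ∑ L ∈ Finset.Icc 2 (g - 1), ((Wit V L K).card : ℝ) * p ^ L := by
      rw [hFdef]
      simp only
      have hdistrib : ∀ S ∈ K.powerset, w S * ((S.card : ℝ) - ∑ L ∈ Finset.Icc 2 (g - 1),
          ((Wit V L S).card : ℝ)) = w S * (S.card : ℝ) - ∑ L ∈ Finset.Icc 2 (g - 1),
          w S * ((Wit V L S).card : ℝ) := by
        intro S _
        rw [mul_sub, Finset.mul_sum]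
      rw [Finset.sum_congr rfl hdistrib, Finset.sum_sub_distrib, hE1, Finset.sum_comm]
      congr 1
      apply Finset.sum_congr rfl
      intro L _
      exact hE2 L
    rw [hsplit]
    have h1 : (g : ℝ) * c ^ 2 * (n : ℝ) ^ β = c / (2 * Kr) * (n : ℝ) ^ β := by
      have h2 : (g : ℝ) * c ^ 2 = c / (2 * Kr) := by
        have h3 : (g : ℝ) * c ^ 2 = ((g:ℝ) * c) * c := by ring
        rw [h3, hgc]
        field_simp
      rw [h2]
    have h2 : c / Kr * (n : ℝ) ^ β - c / (2 * Kr) * (n : ℝ) ^ β = T := by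
      rw [hTdef]
      field_simp
      ring
    linarith [hNp, h1 ▸ hbad]
  -- extract a good S
  have hex : ∃ S ∈ K.powerset, T ≤ F S := by
    by_contra hcon
    push_neg at hcon
    have hlt : ∑ S ∈ K.powerset, w S * F S < ∑ S ∈ K.powerset, w S * T := by
      apply Finset.sum_lt_sum_of_nonempty ⟨∅, Finset.empty_mem_powerset K⟩
      intro S hS
      exact mul_lt_mul_of_pos_left (hcon S hS) (hwpos S)
    have heq : ∑ S ∈ K.powerset, w S * T = T := by
      rw [← Finset.sum_mul, hwsum, one_mul]
    rw [heq] at hlt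
    linarith
  obtain ⟨S, hSK, hTS⟩ := hex
  rw [Finset.mem_powerset] at hSK
  -- deletion
  set D : Finset (Finset ℕ) := (Finset.Icc 2 (g - 1)).biUnion
    (fun L => if h : 0 < L then (Wit V L S).image (fun w => w.2 ⟨0, h⟩) else ∅) with hDdef
  set S' : Finset (Finset ℕ) := S \ D with hS'def
  have hS'K : S' ⊆ K := (Finset.sdiff_subset).trans hSK
  have hS'V : ∀ E ∈ S', E ⊆ V := by
    intro E hE
    exact (Finset.mem_powersetCard.1 (hS'K hE)).1
  -- cardinality of the deletion set
  have hDcard : (D.card : ℝ) ≤ ∑ L ∈ Finset.Icc 2 (g - 1), ((Wit V L S).card : ℝ) := by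
    have h1 : D.card ≤ ∑ L ∈ Finset.Icc 2 (g - 1),
        (if h : 0 < L then (Wit V L S).image (fun w => w.2 ⟨0, h⟩) else ∅).card :=
      Finset.card_biUnion_le
    have h2 : ∀ L ∈ Finset.Icc 2 (g - 1),
        (if h : 0 < L then (Wit V L S).image (fun w => w.2 ⟨0, h⟩) else ∅).card
          ≤ (Wit V L S).card := by
      intro L _
      split
      · exact Finset.card_image_le
      · simp
    calc (D.card : ℝ) ≤ ((∑ L ∈ Finset.Icc 2 (g - 1),
          (if h : 0 < L then (Wit V L S).image (fun w => w.2 ⟨0, h⟩) else ∅).card : ℕ) : ℝ) := by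
          exact_mod_cast h1
      _ ≤ ((∑ L ∈ Finset.Icc 2 (g - 1), (Wit V L S).card : ℕ) : ℝ) := by
          exact_mod_cast Finset.sum_le_sum h2
      _ = ∑ L ∈ Finset.Icc 2 (g - 1), ((Wit V L S).card : ℝ) := by push_cast; rfl
  -- the hypergraph
  refine ⟨⟨V, S', fun E hE => (Finset.mem_powersetCard.1 (hS'K hE)).2,
    fun E hE => (Finset.mem_powersetCard.1 (hS'K hE)).1⟩, hVcard, ?_, ?_⟩
  · -- edge count
    have hcard1 : (S.card : ℝ) ≤ (S'.card : ℝ) + (D.card : ℝ) := by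
      have := Finset.card_le_card_sdiff_add_card (s := S) (t := D)
      exact_mod_cast this
    have hFS : T ≤ (S.card : ℝ) - ∑ L ∈ Finset.Icc 2 (g - 1), ((Wit V L S).card : ℝ) := hTS
    simp only
    calc c / (2 * Kr) * (n : ℝ) ^ (((g : ℝ) - 1) / ((g : ℝ) - 2)) = T := by
          rw [hTdef, hβdef]
      _ ≤ (S.card : ℝ) - ∑ L ∈ Finset.Icc 2 (g - 1), ((Wit V L S).card : ℝ) := hFS
      _ ≤ (S.card : ℝ) - (D.card : ℝ) := by linarith [hDcard]
      _ ≤ (S'.card : ℝ) := by linarith [hcard1]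
  · -- girth
    intro L₀ hcyc
    by_contra hlt
    push_neg at hlt
    obtain ⟨hL₀2, x, e, he, hxne, hinc, hee, hcl⟩ := hcyc
    obtain ⟨L, hL2, hLle, wit, hwit⟩ := extract V S' hS'V L₀ hL₀2 ⟨x, e, he, hxne, hinc, hee, hcl⟩
    have hwitS : wit ∈ Wit V L S := Wit_mono Finset.sdiff_subset hwit
    have hLpos : 0 < L := by omega
    have he0D : wit.2 ⟨0, hLpos⟩ ∈ D := by
      rw [hDdef]
      apply Finset.mem_biUnion.2
      refine ⟨L, Finset.mem_Icc.2 ⟨hL2, by omega⟩, ?_⟩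
      rw [dif_pos hLpos]
      exact Finset.mem_image_of_mem _ hwitS
    have he0S' : wit.2 ⟨0, hLpos⟩ ∈ S' := (mem_Wit.1 hwit).2.1 _
    exact (Finset.mem_sdiff.1 he0S').2 he0D
end

section
/- Let Z_1, Z_2, Z_3 be independent standard normal random variables and define f(ε) := P(Z_1 < (1−ε)·Z_2 and (1−ε)·Z_2 < Z_3). Then f is differentiable at 0 with f'(0) = 1/(2π·√3). -/
open MeasureTheory ProbabilityTheory Real Set Filter Topology

noncomputable def gpdf (x : ℝ) : ℝ := (Real.sqrt (2 * Real.pi))⁻¹ * Real.exp (-x^2 / 2)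

lemma gpdf_eq : gpdf = gaussianPDFReal 0 1 := by
  ext x
  simp [gpdf, gaussianPDFReal]

lemma gpdf_cont : Continuous gpdf := by
  unfold gpdf; fun_prop

lemma gpdf_nonneg (x : ℝ) : 0 ≤ gpdf x :=
  mul_nonneg (inv_nonneg.2 (Real.sqrt_nonneg _)) (Real.exp_nonneg _)

lemma gpdf_le (x : ℝ) : gpdf x ≤ (Real.sqrt (2 * Real.pi))⁻¹ := by
  have h1 : Real.exp (-x^2 / 2) ≤ 1 := by
    rw [Real.exp_le_one_iff]
    nlinarith [sq_nonneg x]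
  calc gpdf x ≤ (Real.sqrt (2 * Real.pi))⁻¹ * 1 :=
        mul_le_mul_of_nonneg_left h1 (inv_nonneg.2 (Real.sqrt_nonneg _))
    _ = _ := mul_one _

lemma gpdf_integrable : Integrable gpdf := gpdf_eq ▸ integrable_gaussianPDFReal 0 1

lemma integral_gpdf : ∫ x, gpdf x = 1 := by
  rw [gpdf_eq]
  exact integral_gaussianPDFReal_eq_one 0 one_ne_zero

noncomputable def Phi (t : ℝ) : ℝ := ∫ x in Iic t, gpdf x

lemma Phi_nonneg (t : ℝ) : 0 ≤ Phi t :=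
  integral_nonneg fun x => gpdf_nonneg x

lemma Phi_le_one (t : ℝ) : Phi t ≤ 1 := by
  rw [← integral_gpdf]
  exact setIntegral_le_integral gpdf_integrable (ae_of_all _ fun x => gpdf_nonneg x)

lemma Phi_hasDeriv (t : ℝ) : HasDerivAt Phi (gpdf t) t := by
  have key : (fun u : ℝ => Phi 0 + ∫ x in (0:ℝ)..u, gpdf x) = Phi := by
    funext u
    rw [← intervalIntegral.integral_Iic_sub_Iic gpdf_integrable.integrableOn
      gpdf_integrable.integrableOn]
    unfold Phi
    ring
  rw [← key]
  exact (intervalIntegral.integral_hasDerivAt_right gpdf_integrable.intervalIntegrable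
    gpdf_cont.stronglyMeasurable.stronglyMeasurableAtFilter
    gpdf_cont.continuousAt).const_add (Phi 0)

lemma Phi_cont : Continuous Phi :=
  continuous_iff_continuousAt.2 fun t => (Phi_hasDeriv t).continuousAt

lemma gauss_Iio (t : ℝ) : gaussianReal 0 1 (Iio t) = ENNReal.ofReal (Phi t) := by
  rw [gaussianReal_apply_eq_integral 0 one_ne_zero, ← gpdf_eq, ← integral_Iic_eq_integral_Iio]
  rfl

lemma gauss_Ioi (t : ℝ) : gaussianReal 0 1 (Ioi t) = ENNReal.ofReal (1 - Phi t) := by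
  rw [gaussianReal_apply_eq_integral 0 one_ne_zero, ← gpdf_eq]
  congr 1
  have h := intervalIntegral.integral_Iic_add_Ioi (μ := volume) (b := t) gpdf_integrable.integrableOn
    gpdf_integrable.integrableOn
  rw [integral_gpdf] at h
  unfold Phi
  linarith
lemma measure_set_eq (c : ℝ) :
    ((gaussianReal 0 1).prod ((gaussianReal 0 1).prod (gaussianReal 0 1)))
      {p : ℝ × ℝ × ℝ | p.1 < c * p.2.1 ∧ c * p.2.1 < p.2.2}
    = ENNReal.ofReal (∫ y, Phi (c * y) * (1 - Phi (c * y)) ∂(gaussianReal 0 1)) := by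
  set μ := gaussianReal 0 1 with hμ
  have hS : MeasurableSet {p : ℝ × ℝ × ℝ | p.1 < c * p.2.1 ∧ c * p.2.1 < p.2.2} :=
    MeasurableSet.inter
      (measurableSet_lt measurable_fst (measurable_snd.fst.const_mul c))
      (measurableSet_lt (measurable_snd.fst.const_mul c) measurable_snd.snd)
  have hPhiMeas : Measurable Phi := Phi_cont.measurable
  set g : ℝ × ℝ → ENNReal := fun p =>
    if p.1 < c * p.2 then ENNReal.ofReal (1 - Phi (c * p.2)) else 0 with hg_def
  have hg : Measurable g := by
    apply Measurable.ite
    · exact measurableSet_lt measurable_fst (measurable_snd.const_mul c)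
    · exact (measurable_const.sub (hPhiMeas.comp (measurable_snd.const_mul c))).ennreal_ofReal
    · exact measurable_const
  have hint : Integrable (fun y => Phi (c * y) * (1 - Phi (c * y))) μ := by
    refine Integrable.mono' (integrable_const (1 : ℝ))
      ((Phi_cont.comp (continuous_const.mul continuous_id)).mul
        (continuous_const.sub (Phi_cont.comp (continuous_const.mul continuous_id)))).aestronglyMeasurable
      (ae_of_all _ fun y => ?_)
    have h1 := Phi_nonneg (c * y); have h2 := Phi_le_one (c * y)
    rw [Real.norm_eq_abs, abs_le]
    constructor <;> nlinarith
  calc (μ.prod (μ.prod μ)) {p : ℝ × ℝ × ℝ | p.1 < c * p.2.1 ∧ c * p.2.1 < p.2.2} = ∫⁻ x, (μ.prod μ) (Prod.mk x ⁻¹' {p : ℝ × ℝ × ℝ | p.1 < c * p.2.1 ∧ c * p.2.1 < p.2.2}) ∂μ :=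
        Measure.prod_apply hS
    _ = ∫⁻ x, ∫⁻ y, g (x, y) ∂μ ∂μ := by
        refine lintegral_congr fun x => ?_
        have hTx : MeasurableSet {q : ℝ × ℝ | x < c * q.1 ∧ c * q.1 < q.2} :=
          MeasurableSet.inter
            (measurableSet_lt measurable_const (measurable_fst.const_mul c))
            (measurableSet_lt (measurable_fst.const_mul c) measurable_snd)
        have : Prod.mk x ⁻¹' {p : ℝ × ℝ × ℝ | p.1 < c * p.2.1 ∧ c * p.2.1 < p.2.2}
            = {q : ℝ × ℝ | x < c * q.1 ∧ c * q.1 < q.2} := rfl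
        rw [this, Measure.prod_apply hTx]
        refine lintegral_congr fun y => ?_
        by_cases hxy : x < c * y
        · have hset : (Prod.mk y ⁻¹' {q : ℝ × ℝ | x < c * q.1 ∧ c * q.1 < q.2}) = Ioi (c * y) := by
            ext z; simp [hxy]
          rw [hset, hμ, gauss_Ioi]
          simp [hg_def, hxy]
        · have hset : (Prod.mk y ⁻¹' {q : ℝ × ℝ | x < c * q.1 ∧ c * q.1 < q.2}) = ∅ := by
            ext z; simp [hxy]
          rw [hset, measure_empty]
          simp [hg_def, hxy]
    _ = ∫⁻ y, ∫⁻ x, g (x, y) ∂μ ∂μ := lintegral_lintegral_swap hg.aemeasurable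
    _ = ∫⁻ y, ENNReal.ofReal (1 - Phi (c * y)) * μ (Iio (c * y)) ∂μ := by
        refine lintegral_congr fun y => ?_
        have : (fun x => g (x, y)) = (Iio (c * y)).indicator
            (fun _ => ENNReal.ofReal (1 - Phi (c * y))) := by
          ext x; simp [hg_def, Set.indicator_apply, Set.mem_Iio]
        rw [this, lintegral_indicator measurableSet_Iio, setLIntegral_const]
    _ = ∫⁻ y, ENNReal.ofReal (Phi (c * y) * (1 - Phi (c * y))) ∂μ := by
        refine lintegral_congr fun y => ?_
        rw [hμ, gauss_Iio, ← ENNReal.ofReal_mul (by linarith [Phi_le_one (c * y)])]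
        rw [mul_comm]
    _ = ENNReal.ofReal (∫ y, Phi (c * y) * (1 - Phi (c * y)) ∂μ) := by
        rw [ofReal_integral_eq_lintegral_ofReal hint
          (ae_of_all _ fun y => mul_nonneg (Phi_nonneg _) (by linarith [Phi_le_one (c * y)]))]
lemma abs_gauss_int {b : ℝ} (hb : 0 < b) :
    Integrable (fun y : ℝ => |y| * Real.exp (-b * y^2)) := by
  have h := (integrable_mul_exp_neg_mul_sq hb).abs
  refine h.congr (ae_of_all _ fun y => ?_)
  show |y * Real.exp (-b * y^2)| = |y| * Real.exp (-b * y^2)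
  rw [abs_mul, Real.abs_exp]

lemma int_abs_gpdf : Integrable (fun y : ℝ => |y| * gpdf y) := by
  have h := (abs_gauss_int (by norm_num : (0:ℝ) < 1/2)).const_mul (Real.sqrt (2 * Real.pi))⁻¹
  refine h.congr (ae_of_all _ fun y => ?_)
  show (Real.sqrt (2 * Real.pi))⁻¹ * (|y| * Real.exp (-(1/2 : ℝ) * y^2)) = |y| * gpdf y
  unfold gpdf
  rw [show -(1/2 : ℝ) * y^2 = -y^2/2 by ring]
  ring

lemma integrable_gauss_iff (f : ℝ → ℝ) :
    Integrable f (gaussianReal 0 1) ↔ Integrable (fun y => f y * gpdf y) volume := by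
  rw [gaussianReal_of_var_ne_zero 0 one_ne_zero,
    integrable_withDensity_iff (measurable_gaussianPDF 0 1)
      (ae_of_all _ fun x => ENNReal.ofReal_lt_top)]
  have h : ∀ y : ℝ, (gaussianPDF 0 1 y).toReal = gpdf y := fun y => by
    rw [gaussianPDF, ENNReal.toReal_ofReal (gaussianPDFReal_nonneg _ _ _), gpdf_eq]
  simp_rw [h]

lemma integral_gauss_eq (f : ℝ → ℝ) :
    ∫ y, f y ∂(gaussianReal 0 1) = ∫ y, gpdf y * f y := by
  rw [gaussianReal_of_var_ne_zero 0 one_ne_zero]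
  have hd : (volume.withDensity (gaussianPDF 0 1))
      = volume.withDensity (fun x => ((Real.toNNReal (gpdf x) : NNReal) : ENNReal)) := by
    congr 1
    funext x
    rw [gaussianPDF, gpdf_eq]
    rfl
  rw [hd, integral_withDensity_eq_integral_smul (gpdf_cont.measurable.real_toNNReal) f]
  congr 1
  funext x
  simp [NNReal.smul_def, smul_eq_mul, Real.coe_toNNReal _ (gpdf_nonneg x)]

lemma gpdf_sq (y : ℝ) : gpdf y * gpdf y = Real.exp (-y^2) / (2 * Real.pi) := by
  have h : Real.sqrt (2*Real.pi) * Real.sqrt (2*Real.pi) = 2*Real.pi :=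
    Real.mul_self_sqrt (by positivity)
  have he : Real.exp (-y^2/2) * Real.exp (-y^2/2) = Real.exp (-y^2) := by
    rw [← Real.exp_add]
    congr 1
    ring
  calc gpdf y * gpdf y
      = (Real.sqrt (2*Real.pi) * Real.sqrt (2*Real.pi))⁻¹
        * (Real.exp (-y^2/2) * Real.exp (-y^2/2)) := by unfold gpdf; ring
    _ = Real.exp (-y^2) / (2 * Real.pi) := by rw [h, he, inv_mul_eq_div]

noncomputable def Kfun (y : ℝ) : ℝ := Real.exp (-y^2) * (1 - 2 * Phi y) / (4 * Real.pi)

lemma Kfun_deriv (y : ℝ) : HasDerivAt Kfun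
    (gpdf y * ((-y) * gpdf y * (1 - 2 * Phi y)) - Real.exp (-y^2) * gpdf y / (2 * Real.pi)) y := by
  have h1 : HasDerivAt (fun y : ℝ => -y^2) (-(2*y)) y := by
    have := (hasDerivAt_pow 2 y).neg
    exact (by simpa using this : HasDerivAt (-fun x : ℝ => x^2) (-(2*y)) y)
  have he : HasDerivAt (fun y : ℝ => Real.exp (-y^2)) (Real.exp (-y^2) * (-(2*y))) y :=
    by have := (Real.hasDerivAt_exp (-y^2)).comp y h1; exact this
  have hp : HasDerivAt (fun y : ℝ => 1 - 2 * Phi y) (-(2 * gpdf y)) y := by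
    simpa using ((Phi_hasDeriv y).const_mul 2).const_sub 1
  have hm := (he.mul hp).div_const (4 * Real.pi)
  refine hm.congr_deriv ?_
  have hsq : gpdf y * ((-y) * gpdf y * (1 - 2 * Phi y))
      = (-y) * (Real.exp (-y^2) / (2*Real.pi)) * (1 - 2 * Phi y) := by
    rw [← gpdf_sq y]; ring
  rw [hsq]
  have hπ : Real.pi ≠ 0 := Real.pi_ne_zero
  field_simp
  ring

lemma sq_tendsto_top : Tendsto (fun y : ℝ => -y^2) atTop atBot := by
  have h2 : Tendsto (fun y : ℝ => y^2) atTop atTop :=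
    tendsto_pow_atTop (α := ℝ) (n := 2) (by norm_num)
  exact tendsto_neg_atTop_atBot.comp h2

lemma sq_tendsto_bot : Tendsto (fun y : ℝ => -y^2) atBot atBot := by
  have h2 : Tendsto (fun y : ℝ => y^2) atBot atTop := by
    have h3 : Tendsto (fun y : ℝ => (-y)^2) atBot atTop :=
      (tendsto_pow_atTop (α := ℝ) (n := 2) (by norm_num)).comp tendsto_neg_atBot_atTop
    exact h3.congr fun y => by ring
  exact tendsto_neg_atTop_atBot.comp h2

lemma Kfun_norm_le (y : ℝ) : ‖Kfun y‖ ≤ Real.exp (-y^2) / (4 * Real.pi) := by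
  have habs : |1 - 2 * Phi y| ≤ 1 :=
    abs_le.mpr ⟨by linarith [Phi_le_one y], by linarith [Phi_nonneg y]⟩
  calc ‖Kfun y‖ = Real.exp (-y^2) * |1 - 2 * Phi y| / (4 * Real.pi) := by
        rw [Real.norm_eq_abs, Kfun, abs_div, abs_mul, Real.abs_exp,
          abs_of_pos (by positivity : (0:ℝ) < 4 * Real.pi)]
    _ ≤ Real.exp (-y^2) * 1 / (4 * Real.pi) := by gcongr
    _ = Real.exp (-y^2) / (4 * Real.pi) := by ring

lemma K_tendsto_top : Tendsto Kfun atTop (nhds 0) := by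
  refine squeeze_zero_norm Kfun_norm_le ?_
  have h := Real.tendsto_exp_atBot.comp sq_tendsto_top
  simpa [Function.comp] using h.div_const (4 * Real.pi)

lemma K_tendsto_bot : Tendsto Kfun atBot (nhds 0) := by
  refine squeeze_zero_norm Kfun_norm_le ?_
  have h := Real.tendsto_exp_atBot.comp sq_tendsto_bot
  simpa [Function.comp] using h.div_const (4 * Real.pi)

lemma I1_integrable : Integrable (fun y : ℝ => gpdf y * ((-y) * gpdf y * (1 - 2 * Phi y))) := by
  refine Integrable.mono' ((abs_gauss_int one_pos).const_mul (2*Real.pi)⁻¹)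
    ((gpdf_cont.mul ((continuous_id.neg.mul gpdf_cont).mul
      (continuous_const.sub (continuous_const.mul Phi_cont)))).aestronglyMeasurable)
    (ae_of_all _ fun y => ?_)
  have habs : |1 - 2 * Phi y| ≤ 1 :=
    abs_le.mpr ⟨by linarith [Phi_le_one y], by linarith [Phi_nonneg y]⟩
  calc ‖gpdf y * ((-y) * gpdf y * (1 - 2 * Phi y))‖
      = (gpdf y * gpdf y) * (|y| * |1 - 2 * Phi y|) := by
        rw [Real.norm_eq_abs]
        simp only [abs_mul, abs_neg, abs_of_nonneg (gpdf_nonneg y)]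
        ring
    _ ≤ (Real.exp (-y^2) / (2*Real.pi)) * (|y| * 1) := by
        rw [gpdf_sq]
        gcongr
    _ = (2*Real.pi)⁻¹ * (|y| * Real.exp (-(1:ℝ) * y^2)) := by rw [neg_one_mul]; ring

lemma I2_eq : (fun y : ℝ => Real.exp (-y^2) * gpdf y / (2 * Real.pi))
    = fun y : ℝ => ((Real.sqrt (2*Real.pi))⁻¹ * (2*Real.pi)⁻¹) * Real.exp (-(3/2 : ℝ) * y^2) := by
  funext y
  rw [show -(3/2 : ℝ) * y^2 = -y^2 + -y^2/2 by ring, Real.exp_add]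
  unfold gpdf
  ring

lemma I2_integrable : Integrable (fun y : ℝ => Real.exp (-y^2) * gpdf y / (2 * Real.pi)) := by
  rw [I2_eq]
  exact (integrable_exp_neg_mul_sq (by norm_num : (0:ℝ) < 3/2)).const_mul _

lemma I2_value : ∫ y : ℝ, Real.exp (-y^2) * gpdf y / (2 * Real.pi)
    = 1 / (2 * Real.pi * Real.sqrt 3) := by
  rw [I2_eq, MeasureTheory.integral_const_mul, integral_gaussian]
  rw [show Real.pi / (3/2 : ℝ) = (2 * Real.pi) / 3 by ring,
    Real.sqrt_div (by positivity : (0:ℝ) ≤ 2 * Real.pi)]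
  have h1 : Real.sqrt (2 * Real.pi) ≠ 0 := by positivity
  have h2 : Real.sqrt 3 ≠ 0 := by positivity
  have h3 : Real.pi ≠ 0 := Real.pi_ne_zero
  field_simp

lemma K'_integral_zero : ∫ y : ℝ, (gpdf y * ((-y) * gpdf y * (1 - 2 * Phi y))
    - Real.exp (-y^2) * gpdf y / (2 * Real.pi)) = 0 := by
  have hI : Integrable (fun y : ℝ => gpdf y * ((-y) * gpdf y * (1 - 2 * Phi y))
      - Real.exp (-y^2) * gpdf y / (2 * Real.pi)) := I1_integrable.sub I2_integrable
  have hIic := integral_Iic_of_hasDerivAt_of_tendsto' (a := 0)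
    (fun x _ => Kfun_deriv x) hI.integrableOn K_tendsto_bot
  have hIoi := integral_Ioi_of_hasDerivAt_of_tendsto' (a := 0)
    (fun x _ => Kfun_deriv x) hI.integrableOn K_tendsto_top
  rw [← intervalIntegral.integral_Iic_add_Ioi (b := (0:ℝ)) hI.integrableOn hI.integrableOn,
    hIic, hIoi]
  ring

lemma deriv_integral_value :
    ∫ y, (-y) * gpdf y * (1 - 2 * Phi y) ∂(gaussianReal 0 1)
    = 1 / (2 * Real.pi * Real.sqrt 3) := by
  rw [integral_gauss_eq]
  have hsplit : (fun y : ℝ => gpdf y * ((-y) * gpdf y * (1 - 2 * Phi y)))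
      = fun y : ℝ => (gpdf y * ((-y) * gpdf y * (1 - 2 * Phi y))
        - Real.exp (-y^2) * gpdf y / (2 * Real.pi)) + Real.exp (-y^2) * gpdf y / (2 * Real.pi) := by
    funext y; ring
  have hI1 : Integrable (fun y : ℝ => gpdf y * ((-y) * gpdf y * (1 - 2 * Phi y))
      - Real.exp (-y^2) * gpdf y / (2 * Real.pi)) volume := I1_integrable.sub I2_integrable
  rw [hsplit, integral_add hI1 I2_integrable, K'_integral_zero, I2_value, zero_add]
lemma phi_mul_integrable (c : ℝ) :
    Integrable (fun y => Phi (c * y) * (1 - Phi (c * y))) (gaussianReal 0 1) := by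
  refine Integrable.mono' (integrable_const (1 : ℝ))
    (((Phi_cont.comp (continuous_const.mul continuous_id)).mul
      (continuous_const.sub (Phi_cont.comp (continuous_const.mul continuous_id)))).aestronglyMeasurable)
    (ae_of_all _ fun y => ?_)
  have h1 := Phi_nonneg (c * y); have h2 := Phi_le_one (c * y)
  rw [Real.norm_eq_abs, abs_le]
  constructor <;> nlinarith

/-- For independent standard normals `Z₁, Z₂, Z₃`, the function
`f(ε) := P(Z₁ < (1−ε)·Z₂ ∧ (1−ε)·Z₂ < Z₃)` is differentiable at `0` with
derivative `1/(2π√3)`. -/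
theorem uniqueErgodicity.stmt15 :
    HasDerivAt
      (fun ε : ℝ =>
        (((gaussianReal 0 1).prod ((gaussianReal 0 1).prod (gaussianReal 0 1)))
          {p : ℝ × ℝ × ℝ | p.1 < (1 - ε) * p.2.1 ∧ (1 - ε) * p.2.1 < p.2.2}).toReal)
      (1 / (2 * Real.pi * Real.sqrt 3)) 0 := by
  have key : ∀ ε : ℝ,
      (((gaussianReal 0 1).prod ((gaussianReal 0 1).prod (gaussianReal 0 1)))
        {p : ℝ × ℝ × ℝ | p.1 < (1 - ε) * p.2.1 ∧ (1 - ε) * p.2.1 < p.2.2}).toReal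
      = ∫ y, Phi ((1 - ε) * y) * (1 - Phi ((1 - ε) * y)) ∂(gaussianReal 0 1) := by
    intro ε
    rw [measure_set_eq (1 - ε), ENNReal.toReal_ofReal (integral_nonneg fun y =>
      mul_nonneg (Phi_nonneg _) (by linarith [Phi_le_one ((1 - ε) * y)]))]
  simp only [key]
  have h := hasDerivAt_integral_of_dominated_loc_of_deriv_le (μ := gaussianReal 0 1)
    (F := fun ε y => Phi ((1 - ε) * y) * (1 - Phi ((1 - ε) * y)))
    (F' := fun ε y => (-y) * gpdf ((1 - ε) * y) * (1 - 2 * Phi ((1 - ε) * y)))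
    (x₀ := 0) (bound := fun y => (Real.sqrt (2 * Real.pi))⁻¹ * |y|) (Metric.ball_mem_nhds 0 one_pos)
    (Eventually.of_forall fun ε =>
      (((Phi_cont.comp (continuous_const.mul continuous_id)).mul
        (continuous_const.sub (Phi_cont.comp
          (continuous_const.mul continuous_id)))).aestronglyMeasurable))
    (phi_mul_integrable (1 - 0))
    (by have := gpdf_cont; have := Phi_cont; fun_prop :
      Continuous (fun y : ℝ => (-y) * gpdf ((1 - (0:ℝ)) * y) * (1 - 2 * Phi ((1 - (0:ℝ)) * y)))).aestronglyMeasurable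
    (ae_of_all _ fun y ε _ => ?_) ?_ (ae_of_all _ fun y ε _ => ?_)
  · have hval : ∫ y, (-y) * gpdf ((1 - (0:ℝ)) * y) * (1 - 2 * Phi ((1 - (0:ℝ)) * y))
        ∂(gaussianReal 0 1) = 1 / (2 * Real.pi * Real.sqrt 3) := by
      simp only [show (1:ℝ) - 0 = 1 by norm_num, one_mul]
      exact deriv_integral_value
    exact hval ▸ h.2
  · -- bound
    have habs : |1 - 2 * Phi ((1 - ε) * y)| ≤ 1 :=
      abs_le.mpr ⟨by linarith [Phi_le_one ((1 - ε) * y)], by linarith [Phi_nonneg ((1 - ε) * y)]⟩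
    calc ‖(-y) * gpdf ((1 - ε) * y) * (1 - 2 * Phi ((1 - ε) * y))‖
        = |y| * gpdf ((1 - ε) * y) * |1 - 2 * Phi ((1 - ε) * y)| := by
          rw [Real.norm_eq_abs]
          simp only [abs_mul, abs_neg, abs_of_nonneg (gpdf_nonneg ((1 - ε) * y))]
      _ ≤ |y| * (Real.sqrt (2 * Real.pi))⁻¹ * 1 := by
          gcongr
          exact gpdf_le _
      _ = (Real.sqrt (2 * Real.pi))⁻¹ * |y| := by ring
  · -- bound integrable
    rw [integrable_gauss_iff]
    have h := int_abs_gpdf.const_mul (Real.sqrt (2 * Real.pi))⁻¹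
    refine h.congr (ae_of_all _ fun y => ?_)
    show (Real.sqrt (2 * Real.pi))⁻¹ * (|y| * gpdf y) = (Real.sqrt (2 * Real.pi))⁻¹ * |y| * gpdf y
    ring
  · -- differentiability
    have hlin : HasDerivAt (fun ε : ℝ => (1 - ε) * y) (-y) ε := by
      have := ((hasDerivAt_id ε).const_sub (1:ℝ)).mul_const y
      simpa using this
    have hu : HasDerivAt (fun ε : ℝ => Phi ((1 - ε) * y)) (gpdf ((1 - ε) * y) * (-y)) ε :=
      by have := (Phi_hasDeriv ((1 - ε) * y)).comp ε hlin; exact this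
    have hm := hu.mul ((hasDerivAt_const ε (1:ℝ)).sub hu)
    refine hm.congr_deriv ?_
    simp only [Pi.sub_apply]
    ring
end

section
/- Let G = ⟨V,E⟩ be a finite simple graph in which every vertex has degree at most D, where D ≥ 1 is an integer, and let a := D/(D+1). Define M to be the V×V real matrix with M_{xy} = 0 if x = y, M_{xy} = 1 if {x,y} ∈ E, and M_{xy} = a otherwise. Then M is conditionally negative semidefinite: for every vector v ∈ ℝ^V with Σ_{x∈V} v_x = 0, one has vᵀMv ≤ 0. -/
open Finset

/-- For a finite simple graph `G` of maximum degree at most `D` (`D ≥ 1`) and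
`a := D/(D+1)`, the matrix with `M x y = 0` for `x = y`, `1` for adjacent pairs
and `a` otherwise is conditionally negative semidefinite. -/
theorem uniqueErgodicity.stmt16 {V : Type*} [Fintype V] [DecidableEq V]
    (G : SimpleGraph V) [DecidableRel G.Adj] (D : ℕ) (hD : 1 ≤ D)
    (hdeg : ∀ x : V, G.degree x ≤ D)
    (M : Matrix V V ℝ)
    (hM : ∀ x y : V, M x y =
      if x = y then 0 else if G.Adj x y then 1 else (D : ℝ) / ((D : ℝ) + 1)) :
    ∀ v : V → ℝ, ∑ x, v x = 0 → dotProduct v (M.mulVec v) ≤ 0 := by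
  intro v hv
  set a : ℝ := (D : ℝ) / ((D : ℝ) + 1) with ha
  have hD1 : (0:ℝ) < (D:ℝ) + 1 := by positivity
  have ha1 : a ≤ 1 := by
    rw [ha, div_le_one hD1]; linarith
  have ha0 : 0 ≤ a := by positivity
  have haD : (1 - a) * D = a := by
    rw [ha]; field_simp; ring
  -- expand
  have expand : dotProduct v (M.mulVec v) =
      ∑ x, ∑ y, (a * (v x * v y) - (if x = y then a * (v x * v y) else 0)
        + (if G.Adj x y then (1 - a) * (v x * v y) else 0)) := by
    rw [dotProduct]
    refine Finset.sum_congr rfl fun x _ => ?_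
    rw [Matrix.mulVec, dotProduct, Finset.mul_sum]
    refine Finset.sum_congr rfl fun y _ => ?_
    rw [hM]
    by_cases hxy : x = y
    · subst hxy
      simp [G.irrefl]
    · by_cases hadj : G.Adj x y
      · simp [hxy, hadj]; ring
      · simp [hxy, hadj]; ring
  have h1 : ∑ x, ∑ y, a * (v x * v y) = 0 := by
    simp_rw [← Finset.mul_sum, ← Finset.sum_mul, hv]
    simp
  have h2 : ∀ x : V, ∑ y, (if x = y then a * (v x * v y) else 0) = a * (v x)^2 := by
    intro x
    rw [Finset.sum_ite_eq (Finset.univ) x (fun y => a * (v x * v y))]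
    simp [sq]
  have hdegsum : ∀ x : V, ∑ y, (if G.Adj x y then (v x)^2 else 0)
      = (G.degree x : ℝ) * (v x)^2 := by
    intro x
    rw [← Finset.sum_filter, ← SimpleGraph.neighborFinset_eq_filter,
      Finset.sum_const, SimpleGraph.degree]
    simp [mul_comm]
  have hE : ∑ x, ∑ y, (if G.Adj x y then (1 - a) * (v x * v y) else 0)
      ≤ a * ∑ x, (v x)^2 := by
    have step1 : ∑ x, ∑ y, (if G.Adj x y then (1 - a) * (v x * v y) else 0)
        ≤ (1 - a) * ∑ x, ∑ y, (if G.Adj x y then ((v x)^2 + (v y)^2)/2 else 0) := by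
      rw [Finset.mul_sum]
      refine Finset.sum_le_sum fun x _ => ?_
      rw [Finset.mul_sum]
      refine Finset.sum_le_sum fun y _ => ?_
      by_cases hadj : G.Adj x y
      · simp only [hadj, if_true]
        have : v x * v y ≤ ((v x)^2 + (v y)^2)/2 := by nlinarith [sq_nonneg (v x - v y)]
        have h1a : 0 ≤ 1 - a := by linarith
        nlinarith
      · simp [hadj]
    have step2 : ∑ x, ∑ y, (if G.Adj x y then ((v x)^2 + (v y)^2)/2 else 0)
        = ∑ x, (G.degree x : ℝ) * (v x)^2 := by
      have split : ∀ x y : V, (if G.Adj x y then ((v x)^2 + (v y)^2)/2 else 0)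
          = (if G.Adj x y then (v x)^2/2 else 0) + (if G.Adj x y then (v y)^2/2 else 0) := by
        intro x y; by_cases hadj : G.Adj x y <;> simp [hadj] <;> ring
      simp_rw [split, Finset.sum_add_distrib]
      have symm : ∑ x, ∑ y, (if G.Adj x y then (v y)^2/2 else 0)
          = ∑ x, ∑ y, (if G.Adj x y then (v x)^2/2 else 0) := by
        rw [Finset.sum_comm]
        refine Finset.sum_congr rfl fun x _ => Finset.sum_congr rfl fun y _ => ?_
        by_cases h : G.Adj x y
        · simp [h, G.adj_symm h]
        · rw [if_neg (fun hh => h (G.adj_symm hh)), if_neg h]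
      rw [symm, ← two_mul, Finset.mul_sum]
      refine Finset.sum_congr rfl fun x _ => ?_
      have hh : ∑ y, (if G.Adj x y then (v x)^2/2 else 0)
          = (G.degree x : ℝ) * ((v x)^2/2) := by
        rw [← Finset.sum_filter, ← SimpleGraph.neighborFinset_eq_filter,
          Finset.sum_const, SimpleGraph.degree]
        simp [mul_comm]
      rw [hh]; ring
    have step3 : ∑ x, (G.degree x : ℝ) * (v x)^2 ≤ (D : ℝ) * ∑ x, (v x)^2 := by
      rw [Finset.mul_sum]
      refine Finset.sum_le_sum fun x _ => ?_
      have := hdeg x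
      have : (G.degree x : ℝ) ≤ (D : ℝ) := by exact_mod_cast this
      nlinarith [sq_nonneg (v x)]
    calc ∑ x, ∑ y, (if G.Adj x y then (1 - a) * (v x * v y) else 0)
        ≤ (1 - a) * ∑ x, ∑ y, (if G.Adj x y then ((v x)^2 + (v y)^2)/2 else 0) := step1
      _ = (1 - a) * ∑ x, (G.degree x : ℝ) * (v x)^2 := by rw [step2]
      _ ≤ (1 - a) * ((D : ℝ) * ∑ x, (v x)^2) := by
          apply mul_le_mul_of_nonneg_left step3; linarith
      _ = a * ∑ x, (v x)^2 := by rw [← mul_assoc, haD]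
  rw [expand]
  simp_rw [Finset.sum_add_distrib, Finset.sum_sub_distrib]
  rw [h1]
  simp_rw [h2]
  rw [← Finset.mul_sum]
  linarith [hE]
end
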